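/- arXiv:2203.07368 — 10 statements merged into one kernel-verified Lean document; each statement's English description precedes it below -/
import Mathlib

section
/- For every integer H ≥ 1, every integer t ≥ 1, and every real a with 1/2 ≤ a ≤ 1, the rescaled learning rates satisfy 1/t^a ≤ ∑_{i=1}^{t} η_i^t / i^a ≤ 2/t^a. -/
/-- The learning rate `η_j = (H+1)/(H+j)`. -/
noncomputable def eta (H j : ℕ) : ℝ := ((H : ℝ) + 1) / ((H : ℝ) + j)

/-- The rescaled learning rate `η_i^t`:  `η_i^t = η_i ∏_{j=i+1}^t (1 - η_j)` for `1 ≤ i ≤ t`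
(so `η_i^i = η_i`), `η_i^t = 0` for `t < i`, and `η_0^t = ∏_{j=1}^t (1 - η_j)`. -/
noncomputable def etaStep (H i t : ℕ) : ℝ :=
  if i = 0 then ∏ j ∈ Finset.Icc 1 t, (1 - eta H j)
  else if i ≤ t then eta H i * ∏ j ∈ Finset.Icc (i + 1) t, (1 - eta H j)
  else 0

lemma eta_le_one (H j : ℕ) (hj : 1 ≤ j) : eta H j ≤ 1 := by
  have hj' : (1:ℝ) ≤ (j:ℝ) := by exact_mod_cast hj
  have hpos : (0:ℝ) < (H:ℝ) + j := by positivity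
  rw [eta, div_le_one hpos]
  linarith

lemma eta_one (H : ℕ) : eta H 1 = 1 := by
  rw [eta]
  have : (H:ℝ) + 1 ≠ 0 := by positivity
  push_cast
  field_simp

lemma etaStep_nonneg (H i t : ℕ) (hi : 1 ≤ i) : 0 ≤ etaStep H i t := by
  unfold etaStep
  rw [if_neg (by omega)]
  split
  · apply mul_nonneg
    · apply div_nonneg (by positivity) (by positivity)
    · apply Finset.prod_nonneg
      intro j hj
      simp only [Finset.mem_Icc] at hj
      have := eta_le_one H j (by omega)
      linarith
  · exact le_refl 0

lemma etaStep_succ_self (H t : ℕ) : etaStep H (t+1) (t+1) = eta H (t+1) := by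
  rw [etaStep, if_neg (by omega), if_pos le_rfl, Finset.Icc_eq_empty (by omega),
    Finset.prod_empty, mul_one]

lemma etaStep_succ (H i t : ℕ) (hi : 1 ≤ i) (hit : i ≤ t) :
    etaStep H i (t+1) = (1 - eta H (t+1)) * etaStep H i t := by
  unfold etaStep
  rw [if_neg (show ¬ i = 0 by omega), if_neg (show ¬ i = 0 by omega),
    if_pos (show i ≤ t + 1 by omega), if_pos hit,
    Finset.prod_Icc_succ_top (show i + 1 ≤ t + 1 by omega)]
  ring

lemma sum_rec (H t : ℕ) (f : ℕ → ℝ) :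
    ∑ i ∈ Finset.Icc 1 (t+1), etaStep H i (t+1) * f i
      = (1 - eta H (t+1)) * (∑ i ∈ Finset.Icc 1 t, etaStep H i t * f i)
        + eta H (t+1) * f (t+1) := by
  rw [Finset.sum_Icc_succ_top (by omega), etaStep_succ_self, Finset.mul_sum]
  congr 1
  apply Finset.sum_congr rfl
  intro i hi
  simp only [Finset.mem_Icc] at hi
  rw [etaStep_succ H i t hi.1 hi.2]; ring

lemma sum_etaStep_eq_one (H t : ℕ) (ht : 1 ≤ t) :
    ∑ i ∈ Finset.Icc 1 t, etaStep H i t = 1 := by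
  induction t, ht using Nat.le_induction with
  | base =>
      rw [Finset.Icc_self, Finset.sum_singleton, etaStep, if_neg (by omega), if_pos le_rfl,
        Finset.Icc_eq_empty (by omega), Finset.prod_empty, mul_one, eta_one]
  | succ t ht ih =>
      have h := sum_rec H t (fun _ => 1)
      simp only [mul_one] at h
      rw [h, ih]; ring

/-- For every integer `H ≥ 1`, every integer `t ≥ 1`, and every real `a` with `1/2 ≤ a ≤ 1`,
the rescaled learning rates satisfy `1/t^a ≤ ∑_{i=1}^t η_i^t / i^a ≤ 2/t^a`. -/
theorem stmt1 (H t : ℕ) (hH : 1 ≤ H) (ht : 1 ≤ t) (a : ℝ) (ha1 : 1 / 2 ≤ a) (ha2 : a ≤ 1) :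
    1 / (t : ℝ) ^ a ≤ (∑ i ∈ Finset.Icc 1 t, etaStep H i t / (i : ℝ) ^ a) ∧
    (∑ i ∈ Finset.Icc 1 t, etaStep H i t / (i : ℝ) ^ a) ≤ 2 / (t : ℝ) ^ a := by
  have ha0 : 0 < a := by linarith
  constructor
  · -- lower bound
    have hstep : ∀ i ∈ Finset.Icc 1 t, etaStep H i t / (t:ℝ)^a ≤ etaStep H i t / (i:ℝ)^a := by
      intro i hi
      simp only [Finset.mem_Icc] at hi
      have hi1 : (1:ℝ) ≤ (i:ℝ) := by exact_mod_cast hi.1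
      have hit : (i:ℝ) ≤ (t:ℝ) := by exact_mod_cast hi.2
      have hpow : (i:ℝ)^a ≤ (t:ℝ)^a := Real.rpow_le_rpow (by linarith) hit ha0.le
      have hipos : (0:ℝ) < (i:ℝ)^a := Real.rpow_pos_of_pos (by linarith) a
      exact div_le_div_of_nonneg_left (etaStep_nonneg H i t hi.1) hipos hpow
    calc 1 / (t:ℝ)^a = (∑ i ∈ Finset.Icc 1 t, etaStep H i t) / (t:ℝ)^a := by
            rw [sum_etaStep_eq_one H t ht]
      _ = ∑ i ∈ Finset.Icc 1 t, etaStep H i t / (t:ℝ)^a := by rw [Finset.sum_div]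
      _ ≤ _ := Finset.sum_le_sum hstep
  · -- upper bound
    induction t, ht using Nat.le_induction with
    | base =>
        rw [Finset.Icc_self, Finset.sum_singleton, etaStep, if_neg (by omega), if_pos le_rfl,
          Finset.Icc_eq_empty (by omega), Finset.prod_empty, mul_one, eta_one]
        norm_num [Real.one_rpow]
    | succ t ht ih =>
        have hrec := sum_rec H t (fun i => ((i:ℝ)^a)⁻¹)
        simp only [div_eq_mul_inv] at ih ⊢
        rw [hrec]
        set τ : ℝ := (t:ℝ) with hτdef
        have hτ1 : (1:ℝ) ≤ τ := by rw [hτdef]; exact_mod_cast ht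
        have hτpos : (0:ℝ) < τ := by linarith
        have hcast : ((t+1 : ℕ) : ℝ) = τ + 1 := by rw [hτdef]; push_cast; ring
        set h : ℝ := (H:ℝ) with hhdef
        have hh1 : (1:ℝ) ≤ h := by rw [hhdef]; exact_mod_cast hH
        set A : ℝ := τ ^ a with hAdef
        set B : ℝ := (τ+1) ^ a with hBdef
        have hA : 0 < A := Real.rpow_pos_of_pos hτpos a
        have hB : 0 < B := Real.rpow_pos_of_pos (by linarith) a
        have eτ : τ^(1-a) * A = τ := by
          rw [hAdef, ← Real.rpow_add hτpos, sub_add_cancel, Real.rpow_one]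
        have eτ1 : (τ+1)^(1-a) * B = τ+1 := by
          rw [hBdef, ← Real.rpow_add (by linarith), sub_add_cancel, Real.rpow_one]
        have h1 : τ^(1-a) ≤ (τ+1)^(1-a) :=
          Real.rpow_le_rpow (by linarith) (by linarith) (by linarith)
        have hτB : τ * B ≤ (τ+1) * A := by
          nlinarith [mul_le_mul_of_nonneg_right h1 (mul_nonneg hA.le hB.le)]
        have key : 2 * τ * B ≤ (h + 2*τ + 1) * A := by nlinarith
        have hD : (0:ℝ) < h + τ + 1 := by linarith
        have heta : eta H (t+1) = (h+1)/(h+τ+1) := by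
          rw [eta, hcast, hhdef]; ring
        rw [heta, hcast]
        have hS := ih
        have h1η : (0:ℝ) ≤ 1 - (h+1)/(h+τ+1) := by
          rw [sub_nonneg, div_le_one hD]; linarith
        have step1 : (1 - (h+1)/(h+τ+1)) * (∑ i ∈ Finset.Icc 1 t, etaStep H i t * ((i:ℝ)^a)⁻¹)
            ≤ (1 - (h+1)/(h+τ+1)) * (2 * A⁻¹) := mul_le_mul_of_nonneg_left hS h1η
        have step2 : (1 - (h+1)/(h+τ+1)) * (2 * A⁻¹) + (h+1)/(h+τ+1) * B⁻¹ ≤ 2 * B⁻¹ := by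
          have hDne : h+τ+1 ≠ 0 := ne_of_gt hD
          have hAne : A ≠ 0 := ne_of_gt hA
          have hBne : B ≠ 0 := ne_of_gt hB
          have expand : 2*B⁻¹ - ((1 - (h+1)/(h+τ+1)) * (2*A⁻¹) + (h+1)/(h+τ+1) * B⁻¹)
              = ((h+2*τ+1)*A - 2*τ*B)/((h+τ+1)*A*B) := by
            field_simp
            ring
          have hnum : 0 ≤ (h+2*τ+1)*A - 2*τ*B := by linarith [key]
          have hfrac : 0 ≤ ((h+2*τ+1)*A - 2*τ*B)/((h+τ+1)*A*B) :=
            div_nonneg hnum (by positivity)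
          linarith
        linarith
end

section
/- For every integer H ≥ 1 and every integer i ≥ 1, the series ∑_{t=i}^{∞} η_i^t converges and equals 1 + 1/H. -/
/-- For every integer `H ≥ 1` and every integer `i ≥ 1`, the series `∑_{t=i}^∞ η_i^t` converges
and equals `1 + 1/H`.  (Since `η_i^t = 0` whenever `t < i`, the sum over all `t : ℕ` coincides
with the sum over `t ≥ i`.) -/
theorem stmt3 (H i : ℕ) (hH : 1 ≤ H) (hi : 1 ≤ i) :
    HasSum (fun t : ℕ => etaStep H i t) (1 + 1 / (H : ℝ)) := by
  have hi0 : i ≠ 0 := by omega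
  set r : ℝ := (H : ℝ) with hrdef
  have hr1 : (1:ℝ) ≤ r := by rw [hrdef]; exact_mod_cast hH
  have hr0 : (0:ℝ) < r := lt_of_lt_of_le one_pos hr1
  have hi1 : (1:ℝ) ≤ (i:ℝ) := by exact_mod_cast hi
  set P : ℕ → ℝ := fun n => ∏ j ∈ Finset.Icc (i+1) n, (1 - eta H j) with hPdef
  have heta : ∀ j : ℕ, 1 ≤ j → 1 - eta H j = ((j:ℝ) - 1)/(r + j) := by
    intro j hj
    have hj1 : (1:ℝ) ≤ (j:ℝ) := by exact_mod_cast hj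
    have hpos : (0:ℝ) < r + j := by linarith
    unfold eta
    rw [← hrdef]
    field_simp
    ring
  have hetanonneg : 0 ≤ eta H i := by
    unfold eta; positivity
  have hPsucc : ∀ n, i ≤ n → P (n+1) = P n * (1 - eta H (n+1)) := by
    intro n hn
    simp only [hPdef]
    rw [Finset.prod_Icc_succ_top (by omega : i + 1 ≤ n + 1)]
  have hPnonneg : ∀ n, 0 ≤ P n := by
    intro n
    apply Finset.prod_nonneg
    intro j hj
    simp only [Finset.mem_Icc] at hj
    rw [heta j (by omega)]
    have hj1 : (1:ℝ) ≤ (j:ℝ) := by exact_mod_cast (by omega : 1 ≤ j)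
    have : (0:ℝ) < r + j := by linarith
    apply div_nonneg (by linarith) (by linarith)
  have hPi : P i = 1 := by
    simp [hPdef, Finset.Icc_eq_empty_of_lt (by omega : i < i + 1)]
  set B : ℕ → ℝ := fun n => (r+1) * n * P n / (r * (r + i)) with hBdef
  have hri : (0:ℝ) < r + i := by linarith
  have hBstep : ∀ n, i ≤ n → etaStep H i (n+1) = B n - B (n+1) := by
    intro n hn
    have hni : (i:ℝ) ≤ (n:ℝ) := by exact_mod_cast hn
    unfold etaStep
    rw [if_neg hi0, if_pos (by omega : i ≤ n + 1)]
    have hprod : ∏ j ∈ Finset.Icc (i+1) (n+1), (1 - eta H j) = P (n+1) := rfl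
    rw [hprod, hPsucc n hn, heta (n+1) (by omega)]
    simp only [hBdef, hPsucc n hn, heta (n+1) (by omega)]
    have hpos : (0:ℝ) < r + (n+1) := by linarith
    push_cast
    unfold eta
    rw [← hrdef]
    have h1 : r + ((n:ℝ)+1) ≠ 0 := by push_cast at hpos ⊢; linarith
    field_simp
    ring
  have hsum : ∀ n, i ≤ n →
      ∑ t ∈ Finset.range (n+1), etaStep H i t = (1 + 1/r) - B n := by
    intro n hn
    induction n, hn using Nat.le_induction with
    | base =>
      rw [Finset.sum_range_succ]
      have hz : ∑ t ∈ Finset.range i, etaStep H i t = 0 := by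
        apply Finset.sum_eq_zero
        intro t ht
        simp only [Finset.mem_range] at ht
        unfold etaStep
        rw [if_neg hi0, if_neg (by omega)]
      rw [hz, zero_add]
      unfold etaStep
      rw [if_neg hi0, if_pos le_rfl]
      have : ∏ j ∈ Finset.Icc (i+1) i, (1 - eta H j) = P i := rfl
      rw [this, hPi, hBdef]
      simp only [hPi]
      unfold eta
      rw [← hrdef]
      field_simp
      ring
    | succ n hn ih =>
      rw [Finset.sum_range_succ, ih, hBstep n hn]
      ring
  -- bound on P
  have hPle : ∀ n, i ≤ n → P n ≤ ((i:ℝ) * (i+1)) / ((n:ℝ) * (n+1)) := by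
    intro n hn
    induction n, hn using Nat.le_induction with
    | base =>
      rw [hPi]
      have hne : (i:ℝ) * ((i:ℝ)+1) ≠ 0 := by positivity
      rw [div_self hne]
    | succ n hn ih =>
      have hn1 : (1:ℝ) ≤ (n:ℝ) := le_trans hi1 (by exact_mod_cast hn)
      rw [hPsucc n hn, heta (n+1) (by omega)]
      push_cast
      have hfac : ((n:ℝ) + 1 - 1) / (r + ((n:ℝ)+1)) ≤ (n:ℝ) / ((n:ℝ) + 2) := by
        have h1 : (0:ℝ) < (n:ℝ) + 2 := by linarith
        have h2 : (n:ℝ) + 2 ≤ r + ((n:ℝ)+1) := by linarith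
        have := div_le_div_of_nonneg_left (by linarith : (0:ℝ) ≤ (n:ℝ)) h1 h2
        · calc ((n:ℝ) + 1 - 1) / (r + ((n:ℝ)+1)) = (n:ℝ) / (r + ((n:ℝ)+1)) := by ring_nf
            _ ≤ (n:ℝ) / ((n:ℝ) + 2) := div_le_div_of_nonneg_left (by linarith) h1 h2
      calc P n * (((n:ℝ)+1-1)/(r + ((n:ℝ)+1)))
          ≤ (((i:ℝ) * (i+1)) / ((n:ℝ) * (n+1))) * ((n:ℝ) / ((n:ℝ)+2)) := by
            apply mul_le_mul ih hfac
            · apply div_nonneg (by linarith) (by linarith)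
            · positivity
        _ = ((i:ℝ) * (i+1)) / (((n:ℝ)+1) * ((n:ℝ)+1+1)) := by
            field_simp
            ring
  -- B tends to 0
  have hBtend : Filter.Tendsto B Filter.atTop (nhds 0) := by
    have hC : Filter.Tendsto (fun n : ℕ => ((r+1) * i * (i+1) / (r * (r+i))) * (1 / ((n:ℝ) + 1)))
        Filter.atTop (nhds 0) := by
      have := tendsto_one_div_add_atTop_nhds_zero_nat.const_mul ((r+1) * i * (i+1) / (r * (r+i)))
      simpa using this
    apply squeeze_zero' ?_ ?_ hC
    · filter_upwards with n
      simp only [hBdef]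
      have := hPnonneg n
      positivity
    · filter_upwards [Filter.eventually_atTop.2 ⟨i, fun n hn => hn⟩] with n hn
      have hn1 : (1:ℝ) ≤ (n:ℝ) := le_trans hi1 (by exact_mod_cast hn)
      simp only [hBdef]
      rw [div_le_iff₀ (by positivity)]
      have h1 : P n ≤ ((i:ℝ) * (i+1)) / ((n:ℝ) * (n+1)) := hPle n hn
      have h2 : (r+1) * (n:ℝ) * P n ≤ (r+1) * (n:ℝ) * (((i:ℝ) * (i+1)) / ((n:ℝ) * (n+1))) := by
        apply mul_le_mul_of_nonneg_left h1 (by positivity)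
      calc (r+1) * (n:ℝ) * P n ≤ (r+1) * (n:ℝ) * (((i:ℝ) * (i+1)) / ((n:ℝ) * (n+1))) := h2
        _ = ((r+1) * i * (i+1) / (r * (r+i))) * (1 / ((n:ℝ) + 1)) * (r * (r+i)) := by
            field_simp
  -- conclude
  have hnonneg : ∀ t, 0 ≤ etaStep H i t := by
    intro t
    unfold etaStep
    rw [if_neg hi0]
    split
    · exact mul_nonneg hetanonneg (hPnonneg t)
    · exact le_refl 0
  rw [hasSum_iff_tendsto_nat_of_nonneg hnonneg]
  apply (Filter.tendsto_add_atTop_iff_nat 1).mp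
  have hmain : Filter.Tendsto (fun n : ℕ => (1 + 1/r) - B n) Filter.atTop (nhds (1 + 1/r)) := by
    simpa using tendsto_const_nhds.sub hBtend
  apply hmain.congr'
  filter_upwards [Filter.eventually_atTop.2 ⟨i, fun n hn => hn⟩] with n hn
  exact (hsum n hn).symm
end

section
/- There exists an absolute constant C > 0 with the following property. For all positive integers S and T, every δ ∈ (0,1) with ST ≥ e·δ, every γ ∈ (0,1), setting H := ⌈(4/(1−γ)) log(ST/δ)⌉, for every S×S row-stochastic matrix P, every probability row vector ρ ∈ ℝ^S, and every entrywise nonnegative vector V ∈ ℝ^S, the series ∑_{j=0}^{∞} [γ(1+1/H)³]^j ⟨ρP^j, V⟩ converges and is at most C·( ⟨d, V⟩/(1−γ) + δ‖V‖_∞/(S T⁴ (1−γ)) ), where d := (1−γ) ∑_{t=0}^{∞} γ^t ρP^t. -/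
open Matrix

lemma stmt4_prob {S : ℕ} (P : Matrix (Fin S) (Fin S) ℝ)
    (hP0 : ∀ s s', 0 ≤ P s s') (hP1 : ∀ s, ∑ s', P s s' = 1)
    (ρ : Fin S → ℝ) (hρ0 : ∀ s, 0 ≤ ρ s) (hρ1 : ∑ s, ρ s = 1) (j : ℕ) :
    (∀ s, 0 ≤ (ρ ᵥ* (P ^ j)) s) ∧ (∑ s, (ρ ᵥ* (P ^ j)) s = 1) := by
  induction j with
  | zero => simpa using ⟨hρ0, hρ1⟩
  | succ j ih =>
    rw [pow_succ, ← vecMul_vecMul]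
    set q := ρ ᵥ* (P ^ j) with hq
    constructor
    · intro s
      simp only [vecMul, dotProduct]
      exact Finset.sum_nonneg fun s' _ => mul_nonneg (ih.1 s') (hP0 s' s)
    · simp only [vecMul, dotProduct]
      rw [Finset.sum_comm]
      calc ∑ s', ∑ s, q s' * P s' s = ∑ s', q s' * ∑ s, P s' s := by
            simp [Finset.mul_sum]
        _ = 1 := by simp [hP1, ih.2]

set_option maxHeartbeats 8000000 in
/-- There exists an absolute constant `C > 0` such that: for all positive integers `S`, `T`,
every `δ ∈ (0,1)` with `S·T ≥ e·δ`, every `γ ∈ (0,1)`, with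
`H := ⌈(4/(1−γ)) log(S·T/δ)⌉`, for every `S×S` row-stochastic matrix `P`, every probability
row vector `ρ`, and every entrywise nonnegative `V`, the series
`∑_{j=0}^∞ [γ(1+1/H)³]^j ⟨ρP^j, V⟩` converges and is at most
`C·(⟨d, V⟩/(1−γ) + δ‖V‖_∞/(S T⁴ (1−γ)))`, where `d := (1−γ) ∑_{t=0}^∞ γ^t ρP^t`. -/
theorem stmt4 :
    ∃ C : ℝ, 0 < C ∧
      ∀ (S T : ℕ), 0 < S → 0 < T →
      ∀ δ : ℝ, 0 < δ → δ < 1 → Real.exp 1 * δ ≤ (S : ℝ) * T →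
      ∀ γ : ℝ, 0 < γ → γ < 1 →
      ∀ P : Matrix (Fin S) (Fin S) ℝ,
        (∀ s s', 0 ≤ P s s') → (∀ s, ∑ s', P s s' = 1) →
      ∀ ρ : Fin S → ℝ, (∀ s, 0 ≤ ρ s) → (∑ s, ρ s = 1) →
      ∀ V : Fin S → ℝ, (∀ s, 0 ≤ V s) →
      letI H : ℕ := ⌈(4 / (1 - γ)) * Real.log ((S : ℝ) * T / δ)⌉₊
      letI d : Fin S → ℝ := fun s => (1 - γ) * ∑' t : ℕ, γ ^ t * (ρ ᵥ* (P ^ t)) s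
      letI f : ℕ → ℝ :=
        fun j => (γ * (1 + 1 / (H : ℝ)) ^ 3) ^ j * ∑ s, (ρ ᵥ* (P ^ j)) s * V s
      Summable f ∧
        ∑' j, f j ≤ C * ((∑ s, d s * V s) / (1 - γ) +
          δ * (⨆ s, |V s|) / ((S : ℝ) * (T : ℝ) ^ 4 * (1 - γ))) := by
  refine ⟨Real.exp 12, Real.exp_pos 12, ?_⟩
  intro S T hS hT δ hδ0 hδ1 hδST γ hγ0 hγ1 P hP0 hP1 ρ hρ0 hρ1 V hV0
  have hne : Nonempty (Fin S) := ⟨⟨0, hS⟩⟩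
  set x : ℝ := 1 - γ with hxdef
  have hx0 : 0 < x := by rw [hxdef]; linarith
  have hx1 : x < 1 := by rw [hxdef]; linarith
  set A : ℝ := (S : ℝ) * T / δ with hAdef
  set H : ℕ := ⌈4 / x * Real.log A⌉₊ with hHdef
  set β : ℝ := γ * (1 + 1 / (H : ℝ)) ^ 3 with hβdef
  have hHR : 4 / x * Real.log A ≤ (H : ℝ) := by rw [hHdef]; exact Nat.le_ceil _
  clear_value x A H β
  have hS1 : (1 : ℝ) ≤ S := by exact_mod_cast hS
  have hT1 : (1 : ℝ) ≤ T := by exact_mod_cast hT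
  have hA0 : 0 < A := by rw [hAdef]; positivity
  have hAe : Real.exp 1 ≤ A := by rw [hAdef]; exact (le_div_iff₀ hδ0).2 hδST
  have hlogA : 1 ≤ Real.log A := (Real.le_log_iff_exp_le hA0).2 hAe
  have hHx : 4 / x ≤ (H : ℝ) := by
    calc 4 / x = 4 / x * 1 := by ring
      _ ≤ 4 / x * Real.log A := by
          apply mul_le_mul_of_nonneg_left hlogA (div_nonneg (by norm_num) hx0.le)
      _ ≤ (H : ℝ) := hHR
  have hH0 : (0 : ℝ) < H := lt_of_lt_of_le (div_pos (by norm_num) hx0) hHx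
  have h1H : 1 / (H : ℝ) ≤ x / 4 := by
    rw [div_le_div_iff₀ hH0 (by norm_num)]
    calc (1 : ℝ) * 4 = x * (4 / x) := by field_simp
      _ ≤ x * H := by apply mul_le_mul_of_nonneg_left hHx hx0.le
  have hβ0 : 0 ≤ β := by
    rw [hβdef]; positivity
  have hβe : β ≤ Real.exp (-(x / 4)) := by
    have h1 : γ ≤ Real.exp (-x) := by
      have := Real.add_one_le_exp (-x)
      simp only [hxdef] at this ⊢; linarith
    have h2 : (1 + 1 / (H : ℝ)) ^ 3 ≤ Real.exp (x / 4) ^ 3 := by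
      apply pow_le_pow_left₀ (by positivity)
      calc 1 + 1 / (H : ℝ) ≤ 1 + x / 4 := by linarith
        _ ≤ Real.exp (x / 4) := by linarith [Real.add_one_le_exp (x / 4)]
    calc β ≤ Real.exp (-x) * Real.exp (x / 4) ^ 3 := by
          rw [hβdef]
          apply mul_le_mul h1 h2 (by positivity) (Real.exp_pos _).le
      _ = Real.exp (-(x / 4)) := by
          rw [← Real.exp_nat_mul, ← Real.exp_add]
          norm_num
          ring_nf
  have hβ1 : β < 1 := lt_of_le_of_lt hβe (by
    rw [Real.exp_lt_one_iff]; linarith)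
  have hexp14 : Real.exp (1 / 4 : ℝ) ≤ 4 / 3 := by
    have h4 : Real.exp (1 / 4 : ℝ) ^ 4 = Real.exp 1 := by
      rw [← Real.exp_nat_mul]; norm_num
    have h5 : Real.exp (1 / 4 : ℝ) ^ 4 ≤ (4 / 3 : ℝ) ^ 4 := by
      rw [h4]; nlinarith [Real.exp_one_lt_d9]
    exact le_of_pow_le_pow_left₀ (by norm_num) (by norm_num) h5
  have h1β : 3 * x / 16 ≤ 1 - β := by
    have he1 : Real.exp (x / 4) * Real.exp (-(x / 4)) = 1 := by
      rw [← Real.exp_add]; simp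
    have ht : x / 4 * Real.exp (-(x / 4)) ≤ 1 - Real.exp (-(x / 4)) := by
      nlinarith [Real.add_one_le_exp (x / 4), Real.exp_pos (-(x / 4))]
    have hm : Real.exp (-(1 / 4 : ℝ)) ≤ Real.exp (-(x / 4)) :=
      Real.exp_le_exp.2 (by linarith)
    have h34 : (3 / 4 : ℝ) ≤ Real.exp (-(1 / 4 : ℝ)) := by
      have hpos := Real.exp_pos (1 / 4 : ℝ)
      have hinv : Real.exp (1 / 4 : ℝ) * Real.exp (-(1 / 4 : ℝ)) = 1 := by
        rw [← Real.exp_add]; simp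
      nlinarith
    have h35 : x / 4 * (3 / 4) ≤ x / 4 * Real.exp (-(x / 4)) :=
      mul_le_mul_of_nonneg_left (le_trans h34 hm) (by linarith)
    linarith
  -- probability vector facts
  have hp0 : ∀ j s, 0 ≤ (ρ ᵥ* (P ^ j)) s :=
    fun j => (stmt4_prob P hP0 hP1 ρ hρ0 hρ1 j).1
  have hp1 : ∀ j, ∑ s, (ρ ᵥ* (P ^ j)) s = 1 :=
    fun j => (stmt4_prob P hP0 hP1 ρ hρ0 hρ1 j).2
  have hps1 : ∀ j s, (ρ ᵥ* (P ^ j)) s ≤ 1 := by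
    intro j s
    rw [← hp1 j]
    exact Finset.single_le_sum (fun i _ => hp0 j i) (Finset.mem_univ s)
  set W : ℝ := ⨆ s, |V s| with hWdef
  have hbdd : BddAbove (Set.range fun s : Fin S => |V s|) :=
    (Set.finite_range _).bddAbove
  have hVW : ∀ s, V s ≤ W := by
    intro s
    calc V s = |V s| := (abs_of_nonneg (hV0 s)).symm
      _ ≤ W := le_ciSup hbdd s
  have hW0 : 0 ≤ W :=
    le_trans (abs_nonneg (V (Classical.arbitrary _)))
      (le_ciSup hbdd (Classical.arbitrary _))
  have hg0 : ∀ j, 0 ≤ ∑ s, (ρ ᵥ* (P ^ j)) s * V s :=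
    fun j => Finset.sum_nonneg fun s _ => mul_nonneg (hp0 j s) (hV0 s)
  have hgW : ∀ j, ∑ s, (ρ ᵥ* (P ^ j)) s * V s ≤ W := by
    intro j
    calc ∑ s, (ρ ᵥ* (P ^ j)) s * V s ≤ ∑ s, (ρ ᵥ* (P ^ j)) s * W :=
          Finset.sum_le_sum fun s _ =>
            mul_le_mul_of_nonneg_left (hVW s) (hp0 j s)
      _ = W := by rw [← Finset.sum_mul, hp1 j, one_mul]
  -- summability
  have hfsum : Summable (fun j => β ^ j * ∑ s, (ρ ᵥ* (P ^ j)) s * V s) := by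
    apply Summable.of_nonneg_of_le
      (fun j => mul_nonneg (pow_nonneg hβ0 j) (hg0 j))
      (fun j => mul_le_mul_of_nonneg_left (hgW j) (pow_nonneg hβ0 j))
      ((summable_geometric_of_lt_one hβ0 hβ1).mul_right W)
  have hγg : Summable (fun t : ℕ => γ ^ t * ∑ s, (ρ ᵥ* (P ^ t)) s * V s) := by
    apply Summable.of_nonneg_of_le
      (fun t => mul_nonneg (pow_nonneg hγ0.le t) (hg0 t))
      (fun t => mul_le_mul_of_nonneg_left (hgW t) (pow_nonneg hγ0.le t))
      ((summable_geometric_of_lt_one hγ0.le hγ1).mul_right W)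
  have hγp : ∀ s, Summable (fun t : ℕ => γ ^ t * (ρ ᵥ* (P ^ t)) s) := by
    intro s
    apply Summable.of_nonneg_of_le
      (fun t => mul_nonneg (pow_nonneg hγ0.le t) (hp0 t s))
      (fun t => by
        calc γ ^ t * (ρ ᵥ* (P ^ t)) s ≤ γ ^ t * 1 :=
              mul_le_mul_of_nonneg_left (hps1 t s) (pow_nonneg hγ0.le t)
          _ = γ ^ t := mul_one _)
      (summable_geometric_of_lt_one hγ0.le hγ1)
  -- the key identity for d
  set Tg : ℝ := ∑' t : ℕ, γ ^ t * ∑ s, (ρ ᵥ* (P ^ t)) s * V s with hTgdef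
  have hTg0 : 0 ≤ Tg :=
    tsum_nonneg fun t => mul_nonneg (pow_nonneg hγ0.le t) (hg0 t)
  have hD : (∑ s, (x * ∑' t : ℕ, γ ^ t * (ρ ᵥ* (P ^ t)) s) * V s) = x * Tg := by
    have step1 : ∀ s : Fin S,
        (x * ∑' t : ℕ, γ ^ t * (ρ ᵥ* (P ^ t)) s) * V s
          = x * ∑' t : ℕ, γ ^ t * (ρ ᵥ* (P ^ t)) s * V s := by
      intro s
      rw [mul_assoc, ← tsum_mul_right]
    rw [Finset.sum_congr rfl (fun s _ => step1 s), ← Finset.mul_sum]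
    congr 1
    rw [← Summable.tsum_finsetSum (fun s _ => (hγp s).mul_right (V s))]
    apply tsum_congr
    intro t
    rw [Finset.mul_sum]
    exact Finset.sum_congr rfl (fun s _ => by ring)
  clear_value W Tg
  refine ⟨hfsum, ?_⟩
  -- split the series
  rw [← Summable.sum_add_tsum_nat_add (4 * H) hfsum]
  -- head bound
  have hc : ∀ j, j ≤ 4 * H → ((1 + 1 / (H : ℝ)) ^ 3) ^ j ≤ Real.exp 12 := by
    intro j hj
    have hjR : (j : ℝ) ≤ 4 * H := by exact_mod_cast hj
    calc ((1 + 1 / (H : ℝ)) ^ 3) ^ j = (1 + 1 / (H : ℝ)) ^ (3 * j) := by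
          rw [← pow_mul]
      _ ≤ Real.exp (1 / (H : ℝ)) ^ (3 * j) := by
          apply pow_le_pow_left₀ (by positivity)
          linarith [Real.add_one_le_exp (1 / (H : ℝ))]
      _ = Real.exp ((3 * j : ℕ) * (1 / (H : ℝ))) := (Real.exp_nat_mul _ _).symm
      _ ≤ Real.exp 12 := by
          apply Real.exp_le_exp.2
          push_cast
          rw [mul_one_div, div_le_iff₀ hH0]
          linarith
  have hhead : ∑ j ∈ Finset.range (4 * H), β ^ j * ∑ s, (ρ ᵥ* (P ^ j)) s * V s
      ≤ Real.exp 12 * Tg := by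
    calc ∑ j ∈ Finset.range (4 * H), β ^ j * ∑ s, (ρ ᵥ* (P ^ j)) s * V s
        ≤ ∑ j ∈ Finset.range (4 * H),
            Real.exp 12 * (γ ^ j * ∑ s, (ρ ᵥ* (P ^ j)) s * V s) := by
          apply Finset.sum_le_sum
          intro j hj
          have hj' : j ≤ 4 * H := le_of_lt (Finset.mem_range.1 hj)
          have hβj : β ^ j = γ ^ j * ((1 + 1 / (H : ℝ)) ^ 3) ^ j := by
            rw [hβdef, mul_pow]
          have hmm : ((1 + 1 / (H : ℝ)) ^ 3) ^ j * (γ ^ j * ∑ s, (ρ ᵥ* (P ^ j)) s * V s)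
              ≤ Real.exp 12 * (γ ^ j * ∑ s, (ρ ᵥ* (P ^ j)) s * V s) :=
            mul_le_mul_of_nonneg_right (hc j hj')
              (mul_nonneg (pow_nonneg hγ0.le j) (hg0 j))
          rw [hβj]
          nlinarith [hmm]
      _ = Real.exp 12 * ∑ j ∈ Finset.range (4 * H),
            γ ^ j * ∑ s, (ρ ᵥ* (P ^ j)) s * V s := by rw [← Finset.mul_sum]
      _ ≤ Real.exp 12 * Tg := by
          apply mul_le_mul_of_nonneg_left _ (Real.exp_pos 12).le
          rw [hTgdef]
          exact Summable.sum_le_tsum _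
            (fun t _ => mul_nonneg (pow_nonneg hγ0.le t) (hg0 t)) hγg
  -- tail bound
  have htail : ∑' j : ℕ, β ^ (j + 4 * H) * ∑ s, (ρ ᵥ* (P ^ (j + 4 * H))) s * V s
      ≤ β ^ (4 * H) * (1 - β)⁻¹ * W := by
    calc ∑' j : ℕ, β ^ (j + 4 * H) * ∑ s, (ρ ᵥ* (P ^ (j + 4 * H))) s * V s
        ≤ ∑' j : ℕ, β ^ (4 * H) * W * β ^ j := by
          apply Summable.tsum_le_tsum _ ((summable_nat_add_iff (4 * H)).2 hfsum)
            ((summable_geometric_of_lt_one hβ0 hβ1).mul_left _)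
          intro j
          have h1 : β ^ (j + 4 * H) = β ^ j * β ^ (4 * H) := by rw [pow_add]
          have h2 := hgW (j + 4 * H)
          have h3 := hg0 (j + 4 * H)
          have h4 : (0:ℝ) ≤ β ^ j := pow_nonneg hβ0 j
          have h5 : (0:ℝ) ≤ β ^ (4 * H) := pow_nonneg hβ0 (4 * H)
          rw [h1]
          have h7 := mul_le_mul_of_nonneg_left h2 (mul_nonneg h4 h5)
          nlinarith [h7]
      _ = β ^ (4 * H) * W * (1 - β)⁻¹ := by
          rw [tsum_mul_left, tsum_geometric_of_lt_one hβ0 hβ1]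
      _ = β ^ (4 * H) * (1 - β)⁻¹ * W := by ring
  -- tail numeric bound
  have hb4 : β ^ (4 * H) ≤ δ ^ 4 / ((S : ℝ) * T) ^ 4 := by
    calc β ^ (4 * H) ≤ Real.exp (-(x / 4)) ^ (4 * H) :=
          pow_le_pow_left₀ hβ0 hβe _
      _ = Real.exp ((4 * H : ℕ) * (-(x / 4))) := (Real.exp_nat_mul _ _).symm
      _ ≤ Real.exp (-(4 * Real.log A)) := by
          apply Real.exp_le_exp.2
          push_cast
          have h6 : 4 * Real.log A ≤ x * H := by
            rw [div_mul_eq_mul_div, div_le_iff₀ hx0] at hHR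
            nlinarith [hHR]
          nlinarith
      _ = ((A : ℝ) ^ 4)⁻¹ := by
          rw [Real.exp_neg]
          congr 1
          rw [show (4 : ℝ) * Real.log A = ((4:ℕ) : ℝ) * Real.log A by norm_num,
            Real.exp_nat_mul, Real.exp_log hA0]
      _ = δ ^ 4 / ((S : ℝ) * T) ^ 4 := by
          rw [hAdef, div_pow, inv_div]
  have hinv : (1 - β)⁻¹ ≤ 16 / (3 * x) := by
    rw [inv_le_comm₀ (by linarith) (div_pos (by norm_num) (by linarith)), inv_div]
    linarith
  have htail2 : β ^ (4 * H) * (1 - β)⁻¹ * W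
      ≤ Real.exp 12 * (δ * W / ((S : ℝ) * (T : ℝ) ^ 4 * x)) := by
    have hinv0 : (0:ℝ) ≤ (1 - β)⁻¹ := inv_nonneg.2 (by linarith)
    have step : β ^ (4 * H) * (1 - β)⁻¹ ≤ (δ ^ 4 / ((S : ℝ) * T) ^ 4) * (16 / (3 * x)) := by
      apply mul_le_mul hb4 hinv hinv0 (by positivity)
    have hnum : (δ ^ 4 / ((S : ℝ) * T) ^ 4) * (16 / (3 * x))
        ≤ Real.exp 12 * (δ / ((S : ℝ) * (T : ℝ) ^ 4 * x)) := by
      have hST : (0:ℝ) < (S:ℝ) * T := by nlinarith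
      have hd1 : (0:ℝ) < ((S : ℝ) * T) ^ 4 * (3 * x) :=
        mul_pos (pow_pos hST 4) (by linarith)
      have hT40 : (0:ℝ) < (T:ℝ) ^ 4 := pow_pos (by linarith) 4
      have hS40 : (0:ℝ) < (S:ℝ) ^ 4 := pow_pos (by linarith) 4
      have hd2 : (0:ℝ) < (S : ℝ) * (T:ℝ) ^ 4 * x :=
        mul_pos (mul_pos (by linarith) hT40) hx0
      rw [div_mul_div_comm, mul_div_assoc', div_le_div_iff₀ hd1 hd2]
      have he12 : (13 : ℝ) ≤ Real.exp 12 := by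
        linarith [Real.add_one_le_exp (12 : ℝ)]
      have hδ3 : δ ^ 3 ≤ 1 := pow_le_one₀ hδ0.le hδ1.le
      have hS3 : (S : ℝ) ≤ (S : ℝ) ^ 4 := le_self_pow₀ hS1 (by norm_num)
      have hexp : ((S : ℝ) * T) ^ 4 = (S:ℝ)^4 * (T:ℝ)^4 := by ring
      rw [hexp]
      have hδ4 : δ ^ 4 ≤ δ := by nlinarith
      have k1 : δ ^ 4 * (S:ℝ) ≤ δ * (S:ℝ) ^ 4 :=
        mul_le_mul hδ4 hS3 (by linarith) hδ0.le
      have k2 : δ ^ 4 * (S:ℝ) * ((T:ℝ) ^ 4 * x) ≤ δ * (S:ℝ) ^ 4 * ((T:ℝ) ^ 4 * x) :=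
        mul_le_mul_of_nonneg_right k1 (mul_nonneg hT40.le hx0.le)
      have hb : (0:ℝ) ≤ δ * (S:ℝ) ^ 4 * ((T:ℝ) ^ 4 * x) :=
        mul_nonneg (mul_nonneg hδ0.le hS40.le) (mul_nonneg hT40.le hx0.le)
      nlinarith [k2, mul_le_mul_of_nonneg_right he12 hb, hb]
    calc β ^ (4 * H) * (1 - β)⁻¹ * W
        ≤ (δ ^ 4 / ((S : ℝ) * T) ^ 4) * (16 / (3 * x)) * W :=
          mul_le_mul_of_nonneg_right step hW0
      _ ≤ Real.exp 12 * (δ / ((S : ℝ) * (T : ℝ) ^ 4 * x)) * W :=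
          mul_le_mul_of_nonneg_right hnum hW0
      _ = Real.exp 12 * (δ * W / ((S : ℝ) * (T : ℝ) ^ 4 * x)) := by ring
  -- assemble
  have hfinal : Real.exp 12 * Tg + Real.exp 12 * (δ * W / ((S : ℝ) * (T : ℝ) ^ 4 * x))
      = Real.exp 12 * ((x * Tg) / x + δ * W / ((S : ℝ) * (T : ℝ) ^ 4 * x)) := by
    rw [mul_div_assoc, mul_div_cancel_left₀ _ (ne_of_gt hx0) ]
    ring
  calc (∑ j ∈ Finset.range (4 * H), β ^ j * ∑ s, (ρ ᵥ* (P ^ j)) s * V s)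
        + ∑' j : ℕ, β ^ (j + 4 * H) * ∑ s, (ρ ᵥ* (P ^ (j + 4 * H))) s * V s
      ≤ Real.exp 12 * Tg
        + Real.exp 12 * (δ * W / ((S : ℝ) * (T : ℝ) ^ 4 * x)) :=
        add_le_add hhead (le_trans htail htail2)
    _ = Real.exp 12 * ((x * Tg) / x + δ * W / ((S : ℝ) * (T : ℝ) ^ 4 * x)) := hfinal
    _ = Real.exp 12 * ((∑ s, (x * ∑' t : ℕ, γ ^ t * (ρ ᵥ* (P ^ t)) s) * V s) / x
        + δ * W / ((S : ℝ) * (T : ℝ) ^ 4 * x)) := by rw [hD]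
end

section
/- There exists an absolute constant C > 0 with the following property. For all positive integers S and T, every δ ∈ (0,1) with ST ≥ e·δ, every γ ∈ [1/2, 1), setting H := ⌈(4/(1−γ)) log(ST/δ)⌉, for every S×S row-stochastic matrix P, every probability row vector ρ ∈ ℝ^S, and every entrywise nonnegative vector V ∈ ℝ^S, the series ∑_{j=0}^{∞} [γ(1+1/H)³]^j ⟨ρ̃ P^j, V⟩ converges and is at most C·( log(ST/δ)·⟨d, V⟩/(1−γ) + δ‖V‖_∞/(S T⁴ (1−γ)) ), where d := (1−γ) ∑_{t=0}^{∞} γ^t ρP^t and ρ̃ := (d − (1−γ)ρ)/γ. -/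
open Matrix

private lemma poly_bound' (ε : ℝ) (h0 : 0 < ε) :
    (1-ε)*(1+ε/4)^3 ≤ 1 - (3/20)*ε := by
  nlinarith [sq_nonneg ε, mul_nonneg (mul_nonneg h0.le h0.le) h0.le, sq_nonneg (ε*ε), h0.le]

private lemma vecMul_pow_succ' {S : ℕ} (P : Matrix (Fin S) (Fin S) ℝ) (w : Fin S → ℝ) (m : ℕ) (s : Fin S) :
    (w ᵥ* (P ^ (m+1))) s = ∑ s', (w ᵥ* (P ^ m)) s' * P s' s := by
  rw [pow_succ, ← Matrix.vecMul_vecMul]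
  simp [Matrix.vecMul, dotProduct]

private lemma prob_pow' {S : ℕ} (P : Matrix (Fin S) (Fin S) ℝ)
    (hPnn : ∀ s s', 0 ≤ P s s') (hProw : ∀ s, ∑ s', P s s' = 1)
    (p : Fin S → ℝ) (hp : ∀ s, 0 ≤ p s) (hps : ∑ s, p s = 1) :
    ∀ t : ℕ, (∀ s, 0 ≤ (p ᵥ* (P ^ t)) s) ∧ (∑ s, (p ᵥ* (P ^ t)) s = 1) := by
  intro t
  induction t with
  | zero => simpa [Matrix.vecMul_one] using ⟨hp, hps⟩
  | succ t ih =>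
    constructor
    · intro s
      rw [vecMul_pow_succ']
      exact Finset.sum_nonneg fun s' _ => mul_nonneg (ih.1 s') (hPnn s' s)
    · simp only [vecMul_pow_succ']
      rw [Finset.sum_comm]
      calc ∑ s', ∑ s, (p ᵥ* P ^ t) s' * P s' s
          = ∑ s', (p ᵥ* P ^ t) s' * ∑ s, P s' s := by simp [Finset.mul_sum]
        _ = 1 := by simp [hProw, ih.2]

set_option maxHeartbeats 2000000 in
/-- There exists an absolute constant `C > 0` such that: for all positive integers `S`, `T`,
every `δ ∈ (0,1)` with `S·T ≥ e·δ`, every `γ ∈ [1/2,1)`, with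
`H := ⌈(4/(1−γ)) log(S·T/δ)⌉`, for every `S×S` row-stochastic matrix `P`, every probability
row vector `ρ`, and every entrywise nonnegative `V`, the series
`∑_{j=0}^∞ [γ(1+1/H)³]^j ⟨ρ̃P^j, V⟩` converges and is at most
`C·(log(S·T/δ)·⟨d, V⟩/(1−γ) + δ‖V‖_∞/(S T⁴ (1−γ)))`, where
`d := (1−γ) ∑_{t=0}^∞ γ^t ρP^t` and `ρ̃ := (d − (1−γ)ρ)/γ`. -/
theorem stmt5 :
    ∃ C : ℝ, 0 < C ∧
      ∀ (S T : ℕ), 0 < S → 0 < T →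
      ∀ δ : ℝ, 0 < δ → δ < 1 → Real.exp 1 * δ ≤ (S : ℝ) * T →
      ∀ γ : ℝ, 1 / 2 ≤ γ → γ < 1 →
      ∀ P : Matrix (Fin S) (Fin S) ℝ,
        (∀ s s', 0 ≤ P s s') → (∀ s, ∑ s', P s s' = 1) →
      ∀ ρ : Fin S → ℝ, (∀ s, 0 ≤ ρ s) → (∑ s, ρ s = 1) →
      ∀ V : Fin S → ℝ, (∀ s, 0 ≤ V s) →
      letI H : ℕ := ⌈(4 / (1 - γ)) * Real.log ((S : ℝ) * T / δ)⌉₊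
      letI d : Fin S → ℝ := fun s => (1 - γ) * ∑' t : ℕ, γ ^ t * (ρ ᵥ* (P ^ t)) s
      letI ρt : Fin S → ℝ := fun s => (d s - (1 - γ) * ρ s) / γ
      letI f : ℕ → ℝ :=
        fun j => (γ * (1 + 1 / (H : ℝ)) ^ 3) ^ j * ∑ s, (ρt ᵥ* (P ^ j)) s * V s
      Summable f ∧
        ∑' j, f j ≤ C * (Real.log ((S : ℝ) * T / δ) * (∑ s, d s * V s) / (1 - γ) +
          δ * (⨆ s, |V s|) / ((S : ℝ) * (T : ℝ) ^ 4 * (1 - γ))) := by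
  refine ⟨Real.exp 30, Real.exp_pos 30, ?_⟩
  intro S T hS hT δ hδ0 hδ1 hδST γ hγ2 hγ1 P hPnn hProw ρ hρnn hρsum V hVnn
  have hγ0 : (0:ℝ) < γ := by linarith
  have hε0 : (0:ℝ) < 1 - γ := by linarith
  have hε2 : 1 - γ ≤ 1/2 := by linarith
  haveI : Nonempty (Fin S) := ⟨⟨0, hS⟩⟩
  have hS1 : (1:ℝ) ≤ (S:ℝ) := by exact_mod_cast hS
  have hT1 : (1:ℝ) ≤ (T:ℝ) := by exact_mod_cast hT
  have hST0 : (0:ℝ) < (S:ℝ) * T := by nlinarith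
  set L : ℝ := Real.log ((S:ℝ) * T / δ) with hLdef
  have hL1 : 1 ≤ L := by
    have h1 : Real.exp 1 ≤ (S:ℝ)*T/δ := (le_div_iff₀ hδ0).mpr hδST
    calc (1:ℝ) = Real.log (Real.exp 1) := (Real.log_exp 1).symm
      _ ≤ L := Real.log_le_log (Real.exp_pos 1) h1
  set H : ℕ := ⌈4 / (1 - γ) * L⌉₊ with hHdef
  have hHge : 4 / (1-γ) * L ≤ (H:ℝ) := Nat.le_ceil _
  have hHle : (H:ℝ) ≤ 4 / (1-γ) * L + 1 := le_of_lt (Nat.ceil_lt_add_one (by positivity))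
  have h4L : (8:ℝ) ≤ 4/(1-γ) * L := by
    have h8 : (8:ℝ) ≤ 4/(1-γ) := by rw [le_div_iff₀ hε0]; linarith
    nlinarith
  have hH0 : (0:ℝ) < (H:ℝ) := by linarith
  have h4Lε : 4 * L ≤ (1-γ) * (H:ℝ) := by
    have h := hHge
    rw [div_mul_eq_mul_div, div_le_iff₀ hε0] at h
    nlinarith [h]
  have hx0 : (0:ℝ) < 1/(H:ℝ) := by positivity
  have hx4 : 1/(H:ℝ) ≤ (1-γ)/4 := by
    rw [div_le_div_iff₀ hH0 (by norm_num : (0:ℝ) < 4)]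
    nlinarith [h4Lε, hL1, hε0]
  set q : ℝ := γ * (1 + 1/(H:ℝ))^3 with hqdef
  have hq0 : 0 ≤ q := by positivity
  have hq1 : q ≤ 1 - (3/20)*(1-γ) := by
    have h1 : (1:ℝ) + 1/(H:ℝ) ≤ 1 + (1-γ)/4 := by linarith
    have h2 : (1 + 1/(H:ℝ))^3 ≤ (1 + (1-γ)/4)^3 := by
      apply pow_le_pow_left₀ (by positivity) h1
    have h3 : q ≤ γ * (1 + (1-γ)/4)^3 := mul_le_mul_of_nonneg_left h2 hγ0.le
    have h4 := poly_bound' (1-γ) hε0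
    have h5 : γ * (1 + (1-γ)/4)^3 = (1-(1-γ))*(1+(1-γ)/4)^3 := by ring
    linarith [h5 ▸ h3]
  have hqlt1 : q < 1 := by
    have : (0:ℝ) < (3/20)*(1-γ) := by positivity
    linarith
  -- probability vector facts for ρ P^t
  have hp := prob_pow' P hPnn hProw ρ hρnn hρsum
  have hple1 : ∀ (t : ℕ) (s : Fin S), (ρ ᵥ* P^t) s ≤ 1 := by
    intro t s
    have h := Finset.single_le_sum (f := fun s' => (ρ ᵥ* P^t) s') (fun s' _ => (hp t).1 s')
      (Finset.mem_univ s)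
    rw [(hp t).2] at h; exact h
  have hsumm : ∀ (m : ℕ) (s : Fin S), Summable (fun t : ℕ => γ^t * (ρ ᵥ* P^(t+m)) s) := by
    intro m s
    apply Summable.of_nonneg_of_le (fun t => mul_nonneg (pow_nonneg hγ0.le t) ((hp _).1 s))
      (fun t => ?_) (summable_geometric_of_lt_one hγ0.le hγ1)
    calc γ^t * (ρ ᵥ* P^(t+m)) s ≤ γ^t * 1 :=
          mul_le_mul_of_nonneg_left (hple1 _ s) (pow_nonneg hγ0.le t)
      _ = γ^t := mul_one _
  have hsum0 : ∀ s, Summable (fun t : ℕ => γ^t * (ρ ᵥ* P^t) s) := by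
    intro s; simpa using hsumm 0 s
  set d : Fin S → ℝ := fun s => (1 - γ) * ∑' t : ℕ, γ ^ t * (ρ ᵥ* (P ^ t)) s with hddef
  have hd_nn : ∀ s, 0 ≤ d s := fun s =>
    mul_nonneg hε0.le (tsum_nonneg fun t => mul_nonneg (pow_nonneg hγ0.le t) ((hp t).1 s))
  have hd_sumone : ∑ s, d s = 1 := by
    have hswap : ∑ s, ∑' t : ℕ, γ ^ t * (ρ ᵥ* (P ^ t)) s
        = ∑' t : ℕ, ∑ s, γ ^ t * (ρ ᵥ* (P ^ t)) s := (Summable.tsum_finsetSum (fun s _ => hsum0 s)).symm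
    have hinner : ∀ t : ℕ, ∑ s, γ^t * (ρ ᵥ* P^t) s = γ^t := by
      intro t; rw [← Finset.mul_sum, (hp t).2, mul_one]
    calc ∑ s, d s = (1-γ) * ∑ s, ∑' t : ℕ, γ ^ t * (ρ ᵥ* (P ^ t)) s := by
          rw [hddef, ← Finset.mul_sum]
      _ = (1-γ) * ∑' t : ℕ, ∑ s, γ ^ t * (ρ ᵥ* (P ^ t)) s := by rw [hswap]
      _ = (1-γ) * ∑' t : ℕ, γ ^ t := by rw [tsum_congr hinner]
      _ = 1 := by
          rw [tsum_geometric_of_lt_one hγ0.le hγ1]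
          field_simp
  have hd_ge : ∀ (k : ℕ) (s : Fin S), (1-γ) * (γ^k * (ρ ᵥ* P^k) s) ≤ d s := by
    intro k s
    apply mul_le_mul_of_nonneg_left _ hε0.le
    exact Summable.le_tsum (hsum0 s) k (fun t _ => mul_nonneg (pow_nonneg hγ0.le t) ((hp t).1 s))
  set ρt : Fin S → ℝ := fun s => (d s - (1 - γ) * ρ s) / γ with hρtdef
  have hρt_nn : ∀ s, 0 ≤ ρt s := by
    intro s
    simp only [hρtdef]
    apply div_nonneg _ hγ0.le
    have h0 := hd_ge 0 s
    simp only [pow_zero, Matrix.vecMul_one, one_mul] at h0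
    linarith
  have hρt_sum : ∑ s, ρt s = 1 := by
    simp only [hρtdef]
    rw [← Finset.sum_div, Finset.sum_sub_distrib, hd_sumone, ← Finset.mul_sum, hρsum]
    field_simp
    ring
  have hqp := prob_pow' P hPnn hProw ρt hρt_nn hρt_sum
  -- explicit formula for ρt P^j
  have hform : ∀ (j : ℕ) (s : Fin S),
      (ρt ᵥ* P^j) s = (1-γ) * ∑' t : ℕ, γ^t * (ρ ᵥ* P^(t+j+1)) s := by
    intro j
    induction j with
    | zero =>
      intro s
      have hA : Summable (fun t : ℕ => γ^t * (ρ ᵥ* P^(t+1)) s) := hsumm 1 s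
      have h2 : γ * ∑' t : ℕ, γ^t * (ρ ᵥ* P^(t+1)) s
          = ∑' t : ℕ, γ^(t+1) * (ρ ᵥ* P^(t+1)) s := by
        rw [← tsum_mul_left]; exact tsum_congr fun t => by ring
      have h3 := Summable.tsum_eq_zero_add (hsum0 s)
      simp only [pow_zero, Matrix.vecMul_one, one_mul] at h3
      have h4 : ∑' t : ℕ, γ^(t+1) * (ρ ᵥ* P^(t+1)) s
          = (∑' t : ℕ, γ^t * (ρ ᵥ* P^t) s) - ρ s := by
        linarith [h3]
      have h1 : γ * ((1-γ) * ∑' t : ℕ, γ^t * (ρ ᵥ* P^(t+0+1)) s) = d s - (1-γ) * ρ s := by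
        simp only [Nat.add_zero, zero_add]
        calc γ * ((1-γ) * ∑' t : ℕ, γ^t * (ρ ᵥ* P^(t+1)) s)
            = (1-γ) * (γ * ∑' t : ℕ, γ^t * (ρ ᵥ* P^(t+1)) s) := by ring
          _ = (1-γ) * ((∑' t : ℕ, γ^t * (ρ ᵥ* P^t) s) - ρ s) := by rw [h2, h4]
          _ = d s - (1-γ) * ρ s := by rw [hddef]; ring
      have h5 : (ρt ᵥ* P^0) s = ρt s := by simp [Matrix.vecMul_one]
      rw [h5]
      simp only [hρtdef]
      rw [← h1, mul_div_cancel_left₀ _ hγ0.ne']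
    | succ j ih =>
      intro s
      rw [vecMul_pow_succ']
      have step1 : ∀ s' : Fin S, (ρt ᵥ* P^j) s' * P s' s
          = (1-γ) * ∑' t : ℕ, (γ^t * (ρ ᵥ* P^(t+j+1)) s') * P s' s := by
        intro s'
        rw [ih s', mul_assoc, ← tsum_mul_right]
      calc ∑ s', (ρt ᵥ* P^j) s' * P s' s
          = (1-γ) * ∑ s', ∑' t : ℕ, (γ^t * (ρ ᵥ* P^(t+j+1)) s') * P s' s := by
            simp only [step1]; rw [← Finset.mul_sum]
        _ = (1-γ) * ∑' t : ℕ, ∑ s', (γ^t * (ρ ᵥ* P^(t+j+1)) s') * P s' s := by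
            rw [← Summable.tsum_finsetSum (fun s' _ => ?_)]
            have := (hsumm (j+1) s').mul_right (P s' s)
            simpa [← add_assoc, mul_assoc] using this
        _ = (1-γ) * ∑' t : ℕ, γ^t * (ρ ᵥ* P^(t+(j+1)+1)) s := by
            congr 1
            apply tsum_congr
            intro t
            rw [show t+(j+1)+1 = (t+j+1)+1 by omega, vecMul_pow_succ']
            rw [Finset.mul_sum]
            exact Finset.sum_congr rfl fun s' _ => by ring
  -- key entrywise bound
  have hkey : ∀ (j : ℕ) (s : Fin S), γ^(j+1) * (ρt ᵥ* P^j) s ≤ d s := by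
    intro j s
    rw [hform j s]
    have heq1 : γ^(j+1) * ((1-γ) * ∑' t : ℕ, γ^t * (ρ ᵥ* P^(t+j+1)) s)
        = (1-γ) * ∑' t : ℕ, γ^(j+1) * (γ^t * (ρ ᵥ* P^(t+j+1)) s) := by
      rw [tsum_mul_left]; ring
    rw [heq1]
    have hdd : d s = (1-γ) * ∑' t : ℕ, γ ^ t * (ρ ᵥ* (P ^ t)) s := by rw [hddef]
    rw [hdd]
    apply mul_le_mul_of_nonneg_left _ hε0.le
    have hsummable : Summable (fun t : ℕ => γ^(j+1) * (γ^t * (ρ ᵥ* P^(t+j+1)) s)) := by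
      have := (hsumm (j+1) s).mul_left (γ^(j+1))
      simpa [← add_assoc] using this
    have hptw : ∀ t : ℕ, γ^(j+1) * (γ^t * (ρ ᵥ* P^(t+j+1)) s)
        ≤ γ^(t+(j+1)) * (ρ ᵥ* P^(t+(j+1))) s := by
      intro t
      apply le_of_eq
      rw [show t+(j+1) = t+j+1 by omega, pow_add]
      ring
    exact Summable.tsum_le_tsum_of_inj (fun t => t + (j+1)) (add_left_injective (j+1))
      (fun c _ => mul_nonneg (pow_nonneg hγ0.le c) ((hp c).1 s)) hptw hsummable (hsum0 s)
  -- scalar quantities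
  have hbdd : BddAbove (Set.range fun s : Fin S => |V s|) := (Set.finite_range _).bddAbove
  have hVM : ∀ s, V s ≤ ⨆ s : Fin S, |V s| := fun s => (le_abs_self _).trans (le_ciSup hbdd s)
  have hM0 : 0 ≤ ⨆ s : Fin S, |V s| :=
    le_trans (abs_nonneg _) (le_ciSup hbdd (Classical.arbitrary _))
  set M : ℝ := ⨆ s : Fin S, |V s| with hMdef
  set D : ℝ := ∑ s, d s * V s with hDdef
  have hD0 : 0 ≤ D := Finset.sum_nonneg fun s _ => mul_nonneg (hd_nn s) (hVnn s)
  have hA_nn : ∀ j, 0 ≤ ∑ s, (ρt ᵥ* P^j) s * V s := fun j =>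
    Finset.sum_nonneg fun s _ => mul_nonneg ((hqp j).1 s) (hVnn s)
  have hA_M : ∀ j, ∑ s, (ρt ᵥ* P^j) s * V s ≤ M := by
    intro j
    calc ∑ s, (ρt ᵥ* P^j) s * V s ≤ ∑ s, (ρt ᵥ* P^j) s * M :=
          Finset.sum_le_sum fun s _ => mul_le_mul_of_nonneg_left (hVM s) ((hqp j).1 s)
      _ = M := by rw [← Finset.sum_mul, (hqp j).2, one_mul]
  have hA_D : ∀ j, γ^(j+1) * (∑ s, (ρt ᵥ* P^j) s * V s) ≤ D := by
    intro j
    rw [Finset.mul_sum]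
    apply Finset.sum_le_sum
    intro s _
    calc γ^(j+1) * ((ρt ᵥ* P^j) s * V s) = (γ^(j+1) * (ρt ᵥ* P^j) s) * V s := by ring
      _ ≤ d s * V s := mul_le_mul_of_nonneg_right (hkey j s) (hVnn s)
  -- summability
  have hf_nn : ∀ j : ℕ, 0 ≤ q^j * ∑ s, (ρt ᵥ* P^j) s * V s := fun j =>
    mul_nonneg (pow_nonneg hq0 j) (hA_nn j)
  have hf_le : ∀ j : ℕ, q^j * (∑ s, (ρt ᵥ* P^j) s * V s) ≤ q^j * M := fun j =>
    mul_le_mul_of_nonneg_left (hA_M j) (pow_nonneg hq0 j)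
  have hgeoM : Summable (fun j : ℕ => q^j * M) :=
    (summable_geometric_of_lt_one hq0 hqlt1).mul_right M
  have hf_summ : Summable (fun j : ℕ => q^j * ∑ s, (ρt ᵥ* P^j) s * V s) :=
    Summable.of_nonneg_of_le hf_nn hf_le hgeoM
  refine ⟨hf_summ, ?_⟩
  set N : ℕ := 7 * H with hNdef
  clear_value L H q d ρt M D N
  rw [← Summable.sum_add_tsum_nat_add N hf_summ]
  -- head bound
  have he1 : (1 + 1/(H:ℝ))^H ≤ Real.exp 1 := by
    have hHne : (H:ℝ) ≠ 0 := hH0.ne'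
    calc (1 + 1/(H:ℝ))^H ≤ (Real.exp (1/(H:ℝ)))^H := by
          apply pow_le_pow_left₀ (by positivity)
          linarith [Real.add_one_le_exp (1/(H:ℝ))]
      _ = Real.exp ((H:ℝ) * (1/(H:ℝ))) := by rw [← Real.exp_nat_mul]
      _ = Real.exp 1 := by rw [mul_one_div_cancel hHne]
  have hhead_term : ∀ j : ℕ, j < N → q^j * (∑ s, (ρt ᵥ* P^j) s * V s) ≤ 2 * Real.exp 21 * D := by
    intro j hj
    have hAj := hA_nn j
    have hDj := hA_D j
    have hq_pow : q^j = γ^j * ((1+1/(H:ℝ))^3)^j := by rw [hqdef, mul_pow]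
    have h2 : ((1+1/(H:ℝ))^3)^j ≤ Real.exp 21 := by
      rw [← pow_mul]
      calc (1+1/(H:ℝ))^(3*j) ≤ (1+1/(H:ℝ))^(3*N) := by
            apply pow_le_pow_right₀ (by linarith)
            omega
        _ = ((1+1/(H:ℝ))^H)^21 := by rw [← pow_mul]; congr 1; omega
        _ ≤ (Real.exp 1)^21 := pow_le_pow_left₀ (by positivity) he1 21
        _ = Real.exp 21 := by rw [← Real.exp_nat_mul]; norm_num
    have hγA : γ^j * (∑ s, (ρt ᵥ* P^j) s * V s) ≤ 2 * D := by
      have hps : γ^(j+1) = γ^j * γ := pow_succ γ j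
      rw [hps] at hDj
      nlinarith [mul_nonneg (pow_nonneg hγ0.le j) hAj]
    calc q^j * (∑ s, (ρt ᵥ* P^j) s * V s)
        = ((1+1/(H:ℝ))^3)^j * (γ^j * (∑ s, (ρt ᵥ* P^j) s * V s)) := by rw [hq_pow]; ring
      _ ≤ Real.exp 21 * (γ^j * (∑ s, (ρt ᵥ* P^j) s * V s)) := by
          apply mul_le_mul_of_nonneg_right h2
          exact mul_nonneg (pow_nonneg hγ0.le j) hAj
      _ ≤ Real.exp 21 * (2 * D) := mul_le_mul_of_nonneg_left hγA (Real.exp_pos 21).le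
      _ = 2 * Real.exp 21 * D := by ring
  have hLD0 : 0 ≤ L * D / (1-γ) :=
    div_nonneg (mul_nonneg (by linarith) hD0) hε0.le
  have h63 : 63 * Real.exp 21 ≤ Real.exp 30 := by
    have h3 : (4:ℝ) ≤ Real.exp 3 := by linarith [Real.add_one_le_exp (3:ℝ)]
    have h9 : Real.exp 30 = Real.exp 21 * (Real.exp 3 * Real.exp 3 * Real.exp 3) := by
      rw [← Real.exp_add, ← Real.exp_add, ← Real.exp_add]; norm_num
    have h16 : (16:ℝ) ≤ Real.exp 3 * Real.exp 3 := by nlinarith [h3]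
    have h64 : (64:ℝ) ≤ Real.exp 3 * Real.exp 3 * Real.exp 3 := by
      nlinarith [h3, h16, Real.exp_pos 3]
    nlinarith [Real.exp_pos 21, h64, h9]
  have hhead : ∑ j ∈ Finset.range N, q^j * (∑ s, (ρt ᵥ* P^j) s * V s)
      ≤ Real.exp 30 * (L * D / (1-γ)) := by
    have h1 : ∑ j ∈ Finset.range N, q^j * (∑ s, (ρt ᵥ* P^j) s * V s)
        ≤ (N:ℝ) * (2 * Real.exp 21 * D) := by
      calc ∑ j ∈ Finset.range N, q^j * (∑ s, (ρt ᵥ* P^j) s * V s)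
          ≤ ∑ _j ∈ Finset.range N, 2 * Real.exp 21 * D :=
            Finset.sum_le_sum fun j hj => hhead_term j (Finset.mem_range.mp hj)
        _ = (N:ℝ) * (2 * Real.exp 21 * D) := by
            rw [Finset.sum_const, Finset.card_range, nsmul_eq_mul]
    have hNle : (N:ℝ) ≤ (63/8) * (4/(1-γ)*L) := by
      have hNcast : (N:ℝ) = 7*(H:ℝ) := by rw [hNdef]; push_cast; ring
      linarith [hHle, h4L]
    have h2 : (N:ℝ) * (2 * Real.exp 21 * D) ≤ (63/8) * (4/(1-γ)*L) * (2 * Real.exp 21 * D) := by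
      apply mul_le_mul_of_nonneg_right hNle
      positivity
    have h3 : (63/8) * (4/(1-γ)*L) * (2 * Real.exp 21 * D) = 63 * Real.exp 21 * (L * D / (1-γ)) := by
      field_simp
      ring
    have h4 : 63 * Real.exp 21 * (L * D / (1-γ)) ≤ Real.exp 30 * (L * D / (1-γ)) :=
      mul_le_mul_of_nonneg_right h63 hLD0
    linarith
  -- tail bound
  have hq1' : (3/20)*(1-γ) ≤ 1 - q := by linarith
  have h1q0 : (0:ℝ) < 1 - q := by linarith [mul_pos (by norm_num : (0:ℝ) < 3/20) hε0]
  have hqN : q^N ≤ δ^4 / ((S:ℝ)^4 * (T:ℝ)^4) := by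
    have e1 : q^N ≤ (Real.exp (-(3/20)*(1-γ)))^N := by
      apply pow_le_pow_left₀ hq0
      have := Real.add_one_le_exp (-(3/20)*(1-γ))
      linarith
    have e2 : (Real.exp (-(3/20)*(1-γ)))^N = Real.exp ((N:ℝ) * (-(3/20)*(1-γ))) := by
      rw [← Real.exp_nat_mul]
    have e3 : (N:ℝ) * (-(3/20)*(1-γ)) ≤ -(4*L) := by
      have hNcast : (N:ℝ) = 7*(H:ℝ) := by rw [hNdef]; push_cast; ring
      nlinarith [h4Lε, hL1]
    have e4 : Real.exp (-(4*L)) = (δ / ((S:ℝ)*T))^4 := by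
      have hexpL : Real.exp L = (S:ℝ)*T/δ := by
        rw [hLdef]; exact Real.exp_log (by positivity)
      calc Real.exp (-(4*L)) = (Real.exp (4*L))⁻¹ := Real.exp_neg _
        _ = (((S:ℝ)*T/δ)^4)⁻¹ := by
            rw [show (4:ℝ)*L = ((4:ℕ):ℝ)*L by norm_num, Real.exp_nat_mul, hexpL]
        _ = (δ/((S:ℝ)*T))^4 := by rw [← inv_pow, inv_div]
    have e5 : (δ / ((S:ℝ)*T))^4 = δ^4 / ((S:ℝ)^4 * (T:ℝ)^4) := by
      rw [div_pow, mul_pow]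
    calc q^N ≤ (Real.exp (-(3/20)*(1-γ)))^N := e1
      _ = Real.exp ((N:ℝ) * (-(3/20)*(1-γ))) := e2
      _ ≤ Real.exp (-(4*L)) := Real.exp_le_exp.mpr e3
      _ = δ^4 / ((S:ℝ)^4 * (T:ℝ)^4) := by rw [e4, e5]
  have htail : ∑' j : ℕ, q^(j+N) * (∑ s, (ρt ᵥ* P^(j+N)) s * V s)
      ≤ Real.exp 30 * (δ * M / ((S:ℝ) * (T:ℝ)^4 * (1-γ))) := by
    have hsummable1 : Summable (fun j : ℕ => q^(j+N) * (∑ s, (ρt ᵥ* P^(j+N)) s * V s)) :=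
      (summable_nat_add_iff (f := fun m : ℕ => q^m * ∑ s, (ρt ᵥ* P^m) s * V s) N).mpr hf_summ
    have hsummable2 : Summable (fun j : ℕ => q^(j+N) * M) := by
      have := ((summable_geometric_of_lt_one hq0 hqlt1).mul_right M)
      exact (summable_nat_add_iff (f := fun m : ℕ => q^m * M) N).mpr this
    have t1 : ∑' j : ℕ, q^(j+N) * (∑ s, (ρt ᵥ* P^(j+N)) s * V s) ≤ ∑' j : ℕ, q^(j+N) * M :=
      Summable.tsum_le_tsum (fun j => hf_le (j+N)) hsummable1 hsummable2
    have t2 : ∑' j : ℕ, q^(j+N) * M = q^N * (1-q)⁻¹ * M := by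
      have : ∀ j : ℕ, q^(j+N) * M = q^N * M * q^j := fun j => by rw [pow_add]; ring
      rw [tsum_congr this, tsum_mul_left, tsum_geometric_of_lt_one hq0 hqlt1]
      ring
    have t3 : q^N * (1-q)⁻¹ * M ≤ (δ^4 / ((S:ℝ)^4 * (T:ℝ)^4)) * ((3/20)*(1-γ))⁻¹ * M := by
      apply mul_le_mul_of_nonneg_right _ hM0
      apply mul_le_mul hqN _ (by positivity) (by positivity)
      exact inv_anti₀ (by positivity) hq1'
    have t4 : (δ^4 / ((S:ℝ)^4 * (T:ℝ)^4)) * ((3/20)*(1-γ))⁻¹ * M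
        ≤ (20/3) * (δ * M / ((S:ℝ) * (T:ℝ)^4 * (1-γ))) := by
      have hδ4 : δ^4 ≤ δ := by
        simpa using pow_le_pow_of_le_one hδ0.le hδ1.le (by norm_num : 1 ≤ 4)
      have hS4 : (S:ℝ) ≤ (S:ℝ)^4 := le_self_pow₀ hS1 (by norm_num)
      have heq : (δ^4 / ((S:ℝ)^4 * (T:ℝ)^4)) * ((3/20)*(1-γ))⁻¹ * M
          = (20/3) * (δ^4 * M / ((S:ℝ)^4 * (T:ℝ)^4 * (1-γ))) := by
        field_simp
      rw [heq]
      apply mul_le_mul_of_nonneg_left _ (by norm_num : (0:ℝ) ≤ 20/3)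
      have hT4 : (0:ℝ) < (T:ℝ)^4 := by positivity
      have hSpos : (0:ℝ) < (S:ℝ) := by linarith
      apply div_le_div₀ (mul_nonneg hδ0.le hM0) _ (mul_pos (mul_pos hSpos hT4) hε0) _
      · exact mul_le_mul_of_nonneg_right hδ4 hM0
      · nlinarith [hS4, mul_pos hT4 hε0, hT4, hε0]
    have t5 : (20/3) * (δ * M / ((S:ℝ) * (T:ℝ)^4 * (1-γ)))
        ≤ Real.exp 30 * (δ * M / ((S:ℝ) * (T:ℝ)^4 * (1-γ))) := by
      apply mul_le_mul_of_nonneg_right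
      · have := Real.add_one_le_exp (30:ℝ)
        linarith
      · positivity
    linarith
  have hfinal : Real.exp 30 * (L * D / (1-γ)) + Real.exp 30 * (δ * M / ((S:ℝ) * (T:ℝ)^4 * (1-γ)))
      = Real.exp 30 * (L * D / (1-γ) + δ * M / ((S:ℝ) * (T:ℝ)^4 * (1-γ))) := by ring
  linarith [hhead, htail]
end

section
/- Let γ ∈ (0,1), let P be an S×S row-stochastic matrix, let ρ ∈ ℝ^S be a probability row vector, let d := (1−γ) ∑_{t=0}^{∞} γ^t ρP^t, and set ρ̃ := (d − (1−γ)ρ)/γ. Then entrywise, (1−γ) ∑_{i=0}^{∞} γ^i ρ̃ P^i = ((1−γ)²/γ) ∑_{i=0}^{∞} i γ^i ρ P^i, and both series converge absolutely entrywise. -/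
open Matrix

section
variable (γ : ℝ)

lemma key_shift (hγ0 : 0 < γ) : ∀ m : ℕ, (m:ℝ) * γ ^ (m-1) = (1/γ) * ((m:ℝ)^1 * γ ^ m) := by
  intro m
  cases m with
  | zero => simp
  | succ k =>
    have hγ : γ ≠ 0 := ne_of_gt hγ0
    push_cast
    rw [pow_succ]
    field_simp
    ring

lemma key_tsum (hγ0 : 0 < γ) (hγ1 : γ < 1) (a : ℕ → ℝ)
    (ha0 : ∀ n, 0 ≤ a n) (ha1 : ∀ n, a n ≤ 1) :
    ∑' i : ℕ, γ ^ i * ∑' t : ℕ, γ ^ t * a (i + t + 1)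
      = ∑' n : ℕ, (n : ℝ) * γ ^ (n - 1) * a n := by
  have hγ : γ ≠ 0 := ne_of_gt hγ0
  set g : ℕ → ℕ → ℝ := fun m i => if i < m then γ ^ (m-1) * a m else 0 with hg
  have hgnn : ∀ m i, 0 ≤ g m i := by
    intro m i
    simp only [hg]
    split
    · exact mul_nonneg (pow_nonneg hγ0.le _) (ha0 m)
    · exact le_refl 0
  have hzero : ∀ m, ∀ i ∉ Finset.range m, g m i = 0 := by
    intro m i hi
    simp only [Finset.mem_range, not_lt] at hi
    simp [hg, not_lt.mpr hi]
  have hrow : ∀ m, (∑' i, g m i) = (m:ℝ) * γ^(m-1) * a m := by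
    intro m
    rw [tsum_eq_sum (hzero m)]
    have : ∀ i ∈ Finset.range m, g m i = γ ^ (m-1) * a m := by
      intro i hi
      simp only [Finset.mem_range] at hi
      simp [hg, hi]
    rw [Finset.sum_congr rfl this, Finset.sum_const, Finset.card_range, nsmul_eq_mul]
    ring
  have hrowsummable : ∀ m, Summable (g m) := fun m => summable_of_ne_finset_zero (hzero m)
  have hS1 : Summable fun m : ℕ => (m:ℝ) * γ^(m-1) * a m := by
    apply Summable.of_nonneg_of_le
      (fun m => mul_nonneg (mul_nonneg (Nat.cast_nonneg m) (pow_nonneg hγ0.le _)) (ha0 m))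
      (fun m => ?_)
      (((summable_pow_mul_geometric_of_norm_lt_one 1
        (by rwa [Real.norm_eq_abs, abs_of_pos hγ0])).mul_left (1/γ)))
    calc (m:ℝ) * γ^(m-1) * a m ≤ (m:ℝ) * γ^(m-1) * 1 := by
          apply mul_le_mul_of_nonneg_left (ha1 m)
            (mul_nonneg (Nat.cast_nonneg m) (pow_nonneg hγ0.le _))
      _ = (1/γ) * ((m:ℝ)^1 * γ ^ m) := by rw [mul_one, key_shift γ hγ0]
  have hunc : Summable (Function.uncurry g) := by
    apply (summable_prod_of_nonneg (fun p => hgnn p.1 p.2)).mpr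
    refine ⟨hrowsummable, ?_⟩
    simp only [Function.uncurry]
    convert hS1 using 2 with m
    exact hrow m
  have hcolsummable : ∀ i, Summable fun m => g m i := by
    intro i
    apply Summable.of_nonneg_of_le (fun m => hgnn m i) (fun m => ?_) hS1
    by_cases h : i < m
    · simp only [hg, if_pos h]
      have hm1 : (1:ℝ) ≤ (m:ℝ) := by exact_mod_cast Nat.one_le_iff_ne_zero.mpr (by omega)
      nlinarith [pow_nonneg hγ0.le (m-1), ha0 m, mul_nonneg (pow_nonneg hγ0.le (m-1)) (ha0 m)]
    · simp only [hg, if_neg h]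
      exact mul_nonneg (mul_nonneg (Nat.cast_nonneg m) (pow_nonneg hγ0.le _)) (ha0 m)
  have hcol : ∀ i, (∑' m, g m i) = γ ^ i * ∑' t, γ ^ t * a (i + t + 1) := by
    intro i
    have hinj : Function.Injective (fun t : ℕ => i + 1 + t) := fun x y h => by simpa using h
    have hsupp : Function.support (fun m => g m i) ⊆ Set.range (fun t : ℕ => i + 1 + t) := by
      intro m hm
      simp only [Function.mem_support, hg] at hm
      have : i < m := by by_contra h; simp [h] at hm
      exact ⟨m - i - 1, show i + 1 + (m - i - 1) = m by omega⟩
    rw [← Function.Injective.tsum_eq hinj hsupp]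
    have : ∀ t : ℕ, g (i + 1 + t) i = γ ^ i * (γ ^ t * a (i + t + 1)) := by
      intro t
      simp only [hg, if_pos (by omega : i < i + 1 + t)]
      have h1 : i + 1 + t - 1 = i + t := by omega
      have h2 : i + 1 + t = i + t + 1 := by omega
      rw [h1, h2, pow_add]
      ring
    rw [tsum_congr this, tsum_mul_left]
  calc ∑' i : ℕ, γ ^ i * ∑' t : ℕ, γ ^ t * a (i + t + 1)
      = ∑' i, ∑' m, g m i := by exact tsum_congr fun i => (hcol i).symm
    _ = ∑' m, ∑' i, g m i := Summable.tsum_comm' hunc hrowsummable hcolsummable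
    _ = ∑' n : ℕ, (n : ℝ) * γ ^ (n - 1) * a n := tsum_congr hrow

end


/-- Let `γ ∈ (0,1)`, `P` an `S×S` row-stochastic matrix, `ρ` a probability row vector,
`d := (1−γ) ∑_{t=0}^∞ γ^t ρP^t`, and `ρ̃ := (d − (1−γ)ρ)/γ`.  Then entrywise
`(1−γ) ∑_{i=0}^∞ γ^i ρ̃P^i = ((1−γ)²/γ) ∑_{i=0}^∞ i γ^i ρP^i`, both series converging
absolutely entrywise. -/
theorem stmt7 (S : ℕ) (γ : ℝ) (hγ0 : 0 < γ) (hγ1 : γ < 1)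
    (P : Matrix (Fin S) (Fin S) ℝ)
    (hP0 : ∀ s s', 0 ≤ P s s') (hP1 : ∀ s, ∑ s', P s s' = 1)
    (ρ : Fin S → ℝ) (hρ0 : ∀ s, 0 ≤ ρ s) (hρ1 : ∑ s, ρ s = 1) :
    letI d : Fin S → ℝ := fun s => (1 - γ) * ∑' t : ℕ, γ ^ t * (ρ ᵥ* (P ^ t)) s
    letI ρt : Fin S → ℝ := fun s => (d s - (1 - γ) * ρ s) / γ
    ∀ s : Fin S,
      (Summable fun i : ℕ => |γ ^ i * (ρt ᵥ* (P ^ i)) s|) ∧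
      (Summable fun i : ℕ => |(i : ℝ) * γ ^ i * (ρ ᵥ* (P ^ i)) s|) ∧
      (1 - γ) * (∑' i : ℕ, γ ^ i * (ρt ᵥ* (P ^ i)) s) =
        ((1 - γ) ^ 2 / γ) * ∑' i : ℕ, (i : ℝ) * γ ^ i * (ρ ᵥ* (P ^ i)) s := by
  intro s
  have hγ : γ ≠ 0 := ne_of_gt hγ0
  -- basic facts about q n := ρ ᵥ* P^n
  set q : ℕ → Fin S → ℝ := fun n => ρ ᵥ* (P ^ n) with hq
  have hq0 : q 0 = ρ := by simp [hq]
  have hqsucc : ∀ n, q (n+1) = q n ᵥ* P := by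
    intro n
    simp only [hq, pow_succ, Matrix.vecMul_vecMul]
  have hvm : ∀ (v : Fin S → ℝ) (M : Matrix (Fin S) (Fin S) ℝ) (x : Fin S),
      (v ᵥ* M) x = ∑ y, v y * M y x := by
    intro v M x
    simp [Matrix.vecMul, dotProduct]
  have hqnn : ∀ n x, 0 ≤ q n x := by
    intro n
    induction n with
    | zero => simpa [hq0] using hρ0
    | succ n ih =>
      intro x
      rw [hqsucc, hvm]
      exact Finset.sum_nonneg fun y _ => mul_nonneg (ih y) (hP0 y x)
  have hqsum : ∀ n, ∑ x, q n x = 1 := by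
    intro n
    induction n with
    | zero => simpa [hq0] using hρ1
    | succ n ih =>
      rw [hqsucc]
      simp only [hvm]
      rw [Finset.sum_comm]
      simp_rw [← Finset.mul_sum, hP1, mul_one]
      exact ih
  have hq1 : ∀ n x, q n x ≤ 1 := by
    intro n x
    calc q n x ≤ ∑ y, q n y := Finset.single_le_sum (fun y _ => hqnn n y) (Finset.mem_univ x)
      _ = 1 := hqsum n
  -- powers of P are row-stochastic
  have hPpow : ∀ i : ℕ, (∀ x y, 0 ≤ (P^i) x y) ∧ (∀ x, ∑ y, (P^i) x y = 1) := by
    intro i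
    induction i with
    | zero => constructor <;> intro x <;> simp [Matrix.one_apply] <;> intro y <;> positivity
    | succ i ih =>
      constructor
      · intro x y
        rw [pow_succ, Matrix.mul_apply]
        exact Finset.sum_nonneg fun k _ => mul_nonneg (ih.1 x k) (hP0 k y)
      · intro x
        simp only [pow_succ, Matrix.mul_apply]
        rw [Finset.sum_comm]
        simp_rw [← Finset.mul_sum, hP1, mul_one]
        exact ih.2 x
  have hPpow1 : ∀ i x y, (P^i) x y ≤ 1 := by
    intro i x y
    calc (P^i) x y ≤ ∑ z, (P^i) x z :=
          Finset.single_le_sum (fun z _ => (hPpow i).1 x z) (Finset.mem_univ y)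
      _ = 1 := (hPpow i).2 x
  have hgeo : Summable fun t : ℕ => γ ^ t := summable_geometric_of_lt_one hγ0.le hγ1
  have hsum_aux : ∀ h : ℕ → ℝ, (∀ t, 0 ≤ h t) → (∀ t, h t ≤ 1) →
      Summable fun t => γ ^ t * h t := by
    intro h h0 h1
    apply Summable.of_nonneg_of_le (fun t => mul_nonneg (pow_nonneg hγ0.le t) (h0 t))
      (fun t => ?_) hgeo
    calc γ^t * h t ≤ γ^t * 1 := mul_le_mul_of_nonneg_left (h1 t) (pow_nonneg hγ0.le t)
      _ = γ^t := mul_one _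
  -- the modified distribution
  set ρt' : Fin S → ℝ := fun x => (1 - γ) * ∑' t : ℕ, γ ^ t * q (t+1) x with hρt'
  have hfun : (fun x => ((fun s => (1 - γ) * ∑' (t : ℕ), γ ^ t * (ρ ᵥ* P ^ t) s) x
      - (1 - γ) * ρ x) / γ) = ρt' := by
    funext x
    simp only
    have hsplit : (∑' t : ℕ, γ ^ t * q t x) = q 0 x + ∑' t : ℕ, γ ^ (t+1) * q (t+1) x := by
      exact Summable.tsum_eq_zero_add (hsum_aux (fun t => q t x) (fun t => hqnn t x) (fun t => hq1 t x))
        |>.trans (by rw [pow_zero, one_mul])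
    have : (∑' t : ℕ, γ ^ t * (ρ ᵥ* P ^ t) x) = q 0 x + γ * ∑' t : ℕ, γ ^ t * q (t+1) x := by
      rw [show (fun t : ℕ => γ ^ t * (ρ ᵥ* P ^ t) x) = fun t => γ ^ t * q t x from rfl]
      rw [hsplit]
      congr 1
      rw [← tsum_mul_left]
      exact tsum_congr fun t => by rw [pow_succ']; ring
    rw [this, hq0, hρt']
    field_simp
    ring
  -- claim D
  have hsummand : ∀ (i : ℕ) (x : Fin S),
      Summable fun t : ℕ => (1-γ) * (γ^t * q (t+1) x * (P^i) x s) := by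
    intro i x
    have := (hsum_aux (fun t => q (t+1) x) (fun t => hqnn _ x) (fun t => hq1 _ x)).mul_left
      ((1-γ) * (P^i) x s)
    exact this.congr fun t => by ring
  have hD : ∀ i : ℕ, (ρt' ᵥ* (P^i)) s = (1-γ) * ∑' t : ℕ, γ^t * q (t+1+i) s := by
    intro i
    calc (ρt' ᵥ* (P^i)) s = ∑ x, ρt' x * (P^i) x s := hvm _ _ _
      _ = ∑ x, ∑' t : ℕ, (1-γ) * (γ^t * q (t+1) x * (P^i) x s) := by
          refine Finset.sum_congr rfl fun x _ => ?_
          rw [hρt']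
          simp only [tsum_mul_left, tsum_mul_right]
          ring
      _ = ∑' t : ℕ, ∑ x, (1-γ) * (γ^t * q (t+1) x * (P^i) x s) := by
          exact (Summable.tsum_finsetSum fun x _ => hsummand i x).symm
      _ = (1-γ) * ∑' t : ℕ, γ^t * q (t+1+i) s := by
          rw [← tsum_mul_left]
          refine tsum_congr fun t => ?_
          rw [← Finset.mul_sum]
          congr 1
          have hx : ∀ x, γ^t * q (t+1) x * (P^i) x s = γ^t * (q (t+1) x * (P^i) x s) := by
            intro x; ring
          rw [Finset.sum_congr rfl fun x _ => hx x, ← Finset.mul_sum]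
          congr 1
          have : (q (t+1) ᵥ* (P^i)) s = q (t+1+i) s := by
            simp only [hq, Matrix.vecMul_vecMul, ← pow_add]
          rw [← this, hvm]
  -- summability of the two series
  have habs2 : Summable fun i : ℕ => |(i : ℝ) * γ ^ i * (ρ ᵥ* (P ^ i)) s| := by
    apply Summable.of_nonneg_of_le (fun i => abs_nonneg _) (fun i => ?_)
      (summable_pow_mul_geometric_of_norm_lt_one 1
        (by rwa [Real.norm_eq_abs, abs_of_pos hγ0]))
    rw [abs_mul, abs_mul, abs_of_nonneg (Nat.cast_nonneg i : (0:ℝ) ≤ i),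
      abs_of_nonneg (pow_nonneg hγ0.le i), abs_of_nonneg (hqnn i s), pow_one]
    calc (i:ℝ) * γ^i * q i s ≤ (i:ℝ) * γ^i * 1 := by
          exact mul_le_mul_of_nonneg_left (hq1 i s)
            (mul_nonneg (Nat.cast_nonneg i) (pow_nonneg hγ0.le i))
      _ = (i:ℝ) * γ^i := mul_one _
  have habs1 : Summable fun i : ℕ => |γ ^ i * (ρt' ᵥ* (P ^ i)) s| := by
    set M : ℝ := ∑ x, |ρt' x| with hM
    apply Summable.of_nonneg_of_le (fun i => abs_nonneg _) (fun i => ?_) (hgeo.mul_right M)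
    rw [abs_mul, abs_of_nonneg (pow_nonneg hγ0.le i)]
    apply mul_le_mul_of_nonneg_left _ (pow_nonneg hγ0.le i)
    rw [hvm]
    calc |∑ x, ρt' x * (P^i) x s| ≤ ∑ x, |ρt' x * (P^i) x s| := Finset.abs_sum_le_sum_abs _ _
      _ ≤ ∑ x, |ρt' x| := by
          refine Finset.sum_le_sum fun x _ => ?_
          rw [abs_mul, abs_of_nonneg ((hPpow i).1 x s)]
          calc |ρt' x| * (P^i) x s ≤ |ρt' x| * 1 :=
                mul_le_mul_of_nonneg_left (hPpow1 i x s) (abs_nonneg _)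
            _ = |ρt' x| := mul_one _
      _ = M := rfl
  refine ⟨by rw [hfun]; exact habs1, habs2, ?_⟩
  rw [hfun]
  have hmain : (∑' i : ℕ, γ ^ i * (ρt' ᵥ* (P ^ i)) s)
      = (1-γ) * ((1/γ) * ∑' n : ℕ, (n:ℝ) * γ^n * q n s) := by
    calc (∑' i : ℕ, γ ^ i * (ρt' ᵥ* (P ^ i)) s)
        = ∑' i : ℕ, (1-γ) * (γ ^ i * ∑' t : ℕ, γ^t * q (i+t+1) s) := by
          refine tsum_congr fun i => ?_
          rw [hD i]
          rw [show (fun t : ℕ => γ^t * q (t+1+i) s) = fun t => γ^t * q (i+t+1) s by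
            funext t; congr 2; omega]
          ring
      _ = (1-γ) * ∑' i : ℕ, γ ^ i * ∑' t : ℕ, γ^t * q (i+t+1) s := tsum_mul_left
      _ = (1-γ) * ∑' n : ℕ, (n:ℝ) * γ^(n-1) * q n s := by
          rw [key_tsum γ hγ0 hγ1 (fun n => q n s) (fun n => hqnn n s) (fun n => hq1 n s)]
      _ = (1-γ) * ((1/γ) * ∑' n : ℕ, (n:ℝ) * γ^n * q n s) := by
          congr 1
          rw [← tsum_mul_left]
          refine tsum_congr fun n => ?_
          rw [key_shift γ hγ0 n]
          ring
  rw [hmain]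
  have : ∑' (i : ℕ), (i:ℝ) * γ ^ i * (ρ ᵥ* P ^ i) s = ∑' n : ℕ, (n:ℝ) * γ^n * q n s := rfl
  rw [this]
  ring
end

section
/- Let γ ∈ [1/2, 1), let P be an S×S row-stochastic matrix, let r ∈ ℝ^S satisfy 0 ≤ r_s ≤ 1 for all s, let V ∈ ℝ^S be the unique solution of the Bellman equation V = r + γPV (acting on column vectors), let ρ ∈ ℝ^S be a probability row vector, and let d := (1−γ) ∑_{t=0}^{∞} γ^t ρP^t. Define v ∈ ℝ^S by v_s := (P(V∘V))_s − ((PV)_s)², the variance of V under the s-th row of P. Then ∑_s d_s v_s ≤ 14/(1−γ). -/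
open Matrix

/-- Let `γ ∈ [1/2,1)`, `P` an `S×S` row-stochastic matrix, `r ∈ [0,1]^S`, `V` the unique
solution of the Bellman equation `V = r + γPV`, `ρ` a probability row vector, and
`d := (1−γ) ∑_{t=0}^∞ γ^t ρP^t`.  With `v_s := (P(V∘V))_s − ((PV)_s)²` the variance of `V`
under the `s`-th row of `P`, it holds that `∑_s d_s v_s ≤ 14/(1−γ)`. -/
theorem stmt12 (S : ℕ) (hS : 0 < S) (γ : ℝ) (hγ0 : 1 / 2 ≤ γ) (hγ1 : γ < 1)
    (P : Matrix (Fin S) (Fin S) ℝ)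
    (hP0 : ∀ s s', 0 ≤ P s s') (hP1 : ∀ s, ∑ s', P s s' = 1)
    (r : Fin S → ℝ) (hr : ∀ s, 0 ≤ r s ∧ r s ≤ 1)
    (V : Fin S → ℝ) (hV : ∀ s, V s = r s + γ * (P *ᵥ V) s)
    (ρ : Fin S → ℝ) (hρ0 : ∀ s, 0 ≤ ρ s) (hρ1 : ∑ s, ρ s = 1) :
    letI d : Fin S → ℝ := fun s => (1 - γ) * ∑' t : ℕ, γ ^ t * (ρ ᵥ* (P ^ t)) s
    letI v : Fin S → ℝ := fun s => (P *ᵥ (V * V)) s - ((P *ᵥ V) s) ^ 2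
    (∑ s, d s * v s) ≤ 14 / (1 - γ) := by
  beta_reduce
  have hγpos : (0:ℝ) < γ := by linarith
  have h1γ : (0:ℝ) < 1 - γ := by linarith
  -- ρ P^t is a probability vector
  have hq : ∀ t : ℕ, (∀ s, 0 ≤ (ρ ᵥ* (P ^ t)) s) ∧ (∑ s, (ρ ᵥ* (P ^ t)) s = 1) := by
    intro t
    induction t with
    | zero => simpa [Matrix.vecMul_one] using ⟨hρ0, hρ1⟩
    | succ n ih =>
      have hstep : ∀ s, (ρ ᵥ* (P ^ (n+1))) s = ∑ s', (ρ ᵥ* (P ^ n)) s' * P s' s := by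
        intro s
        rw [pow_succ, ← Matrix.vecMul_vecMul]
        rfl
      refine ⟨fun s => ?_, ?_⟩
      · rw [hstep]
        exact Finset.sum_nonneg fun s' _ => mul_nonneg (ih.1 s') (hP0 s' s)
      · rw [Finset.sum_congr rfl fun s _ => hstep s, Finset.sum_comm]
        simp_rw [← Finset.mul_sum, hP1, mul_one]
        exact ih.2
  -- entries of ρ P^t are ≤ 1
  have hqle : ∀ t s, (ρ ᵥ* (P ^ t)) s ≤ 1 := by
    intro t s
    calc (ρ ᵥ* (P ^ t)) s ≤ ∑ s', (ρ ᵥ* (P ^ t)) s' :=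
          Finset.single_le_sum (fun i _ => (hq t).1 i) (Finset.mem_univ s)
      _ = 1 := (hq t).2
  -- summability of each coordinate series
  have hS1 : ∀ s, Summable (fun t : ℕ => γ ^ t * (ρ ᵥ* (P ^ t)) s) := by
    intro s
    refine Summable.of_nonneg_of_le
      (fun t => mul_nonneg (pow_nonneg hγpos.le t) ((hq t).1 s))
      (fun t => ?_) (summable_geometric_of_lt_one hγpos.le hγ1)
    exact mul_le_of_le_one_right (pow_nonneg hγpos.le t) (hqle t s)
  -- summability of the dot-product series
  have hsum_dot : ∀ u : Fin S → ℝ,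
      Summable (fun t : ℕ => γ ^ t * ((ρ ᵥ* (P ^ t)) ⬝ᵥ u)) := by
    intro u
    have : Summable (fun t : ℕ => ∑ s, γ ^ t * (ρ ᵥ* (P ^ t)) s * u s) :=
      summable_sum fun s _ => (hS1 s).mul_right (u s)
    refine this.congr fun t => ?_
    simp [dotProduct, Finset.mul_sum, mul_assoc]
  -- key exchange identity
  have key : ∀ u : Fin S → ℝ,
      (∑ s, ((1 - γ) * ∑' t : ℕ, γ ^ t * (ρ ᵥ* (P ^ t)) s) * u s)
        = (1 - γ) * ∑' t : ℕ, γ ^ t * ((ρ ᵥ* (P ^ t)) ⬝ᵥ u) := by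
    intro u
    have h1 : ∀ s, ((1 - γ) * ∑' t : ℕ, γ ^ t * (ρ ᵥ* (P ^ t)) s) * u s
        = (1 - γ) * ∑' t : ℕ, γ ^ t * (ρ ᵥ* (P ^ t)) s * u s := by
      intro s
      rw [mul_assoc, (hS1 s).tsum_mul_right (u s)]
    rw [Finset.sum_congr rfl fun s _ => h1 s, ← Finset.mul_sum]
    congr 1
    rw [← Summable.tsum_finsetSum (fun s _ => (hS1 s).mul_right (u s))]
    refine tsum_congr fun t => ?_
    simp [dotProduct, Finset.mul_sum, mul_assoc]
  -- total mass of d is 1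
  have hmass : (∑ s, ((1 - γ) * ∑' t : ℕ, γ ^ t * (ρ ᵥ* (P ^ t)) s)) = 1 := by
    have := key (fun _ => 1)
    simp only [mul_one] at this
    rw [this]
    have : ∀ t : ℕ, γ ^ t * ((ρ ᵥ* (P ^ t)) ⬝ᵥ (fun _ => 1)) = γ ^ t := by
      intro t
      simp [dotProduct, (hq t).2]
    rw [tsum_congr this, tsum_geometric_of_lt_one hγpos.le hγ1]
    field_simp
  -- d is nonnegative
  have hdnn : ∀ s, 0 ≤ (1 - γ) * ∑' t : ℕ, γ ^ t * (ρ ᵥ* (P ^ t)) s := by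
    intro s
    exact mul_nonneg h1γ.le (tsum_nonneg fun t =>
      mul_nonneg (pow_nonneg hγpos.le t) ((hq t).1 s))
  -- V is nonnegative
  have hV0 : ∀ s, 0 ≤ V s := by
    obtain ⟨s₀, -, hmin⟩ := Finset.exists_min_image Finset.univ V ⟨⟨0, hS⟩, Finset.mem_univ _⟩
    have hPV : V s₀ ≤ (P *ᵥ V) s₀ := by
      have : (P *ᵥ V) s₀ = ∑ s', P s₀ s' * V s' := rfl
      rw [this]
      calc V s₀ = ∑ s', P s₀ s' * V s₀ := by rw [← Finset.sum_mul, hP1, one_mul]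
        _ ≤ ∑ s', P s₀ s' * V s' :=
          Finset.sum_le_sum fun s' _ =>
            mul_le_mul_of_nonneg_left (hmin s' (Finset.mem_univ _)) (hP0 s₀ s')
    have h0 : 0 ≤ V s₀ := by nlinarith [hV s₀, (hr s₀).1]
    exact fun s => le_trans h0 (hmin s (Finset.mem_univ s))
  -- V is bounded by 1/(1-γ)
  have hVub : ∀ s, V s ≤ 1 / (1 - γ) := by
    obtain ⟨s₁, -, hmax⟩ := Finset.exists_max_image Finset.univ V ⟨⟨0, hS⟩, Finset.mem_univ _⟩
    have hPV : (P *ᵥ V) s₁ ≤ V s₁ := by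
      have : (P *ᵥ V) s₁ = ∑ s', P s₁ s' * V s' := rfl
      rw [this]
      calc ∑ s', P s₁ s' * V s' ≤ ∑ s', P s₁ s' * V s₁ :=
            Finset.sum_le_sum fun s' _ =>
              mul_le_mul_of_nonneg_left (hmax s' (Finset.mem_univ _)) (hP0 s₁ s')
        _ = V s₁ := by rw [← Finset.sum_mul, hP1, one_mul]
    have h1 : V s₁ ≤ 1 / (1 - γ) := by
      rw [le_div_iff₀ h1γ]
      nlinarith [hV s₁, (hr s₁).2]
    exact fun s => le_trans (hmax s (Finset.mem_univ s)) h1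
  -- the shifted-sum inequality : ∑ d (P W) ≤ (1/γ) ∑ d W  with  W = V*V
  have hWnn : ∀ s, 0 ≤ (V * V) s := fun s => mul_self_nonneg (V s)
  have hgnn : ∀ t : ℕ, 0 ≤ γ ^ t * ((ρ ᵥ* (P ^ t)) ⬝ᵥ (V * V)) := by
    intro t
    exact mul_nonneg (pow_nonneg hγpos.le t)
      (Finset.sum_nonneg fun s _ => mul_nonneg ((hq t).1 s) (hWnn s))
  have hshift : (∑ s, ((1 - γ) * ∑' t : ℕ, γ ^ t * (ρ ᵥ* (P ^ t)) s) * (P *ᵥ (V * V)) s)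
      ≤ (1 / γ) * ∑ s, ((1 - γ) * ∑' t : ℕ, γ ^ t * (ρ ᵥ* (P ^ t)) s) * (V * V) s := by
    rw [key (P *ᵥ (V * V)), key (V * V)]
    have hrw : ∀ t : ℕ, γ ^ t * ((ρ ᵥ* (P ^ t)) ⬝ᵥ (P *ᵥ (V * V)))
        = (1 / γ) * (γ ^ (t + 1) * ((ρ ᵥ* (P ^ (t + 1))) ⬝ᵥ (V * V))) := by
      intro t
      rw [dotProduct_mulVec, Matrix.vecMul_vecMul, ← pow_succ]
      rw [pow_succ]
      field_simp
      ring
    rw [tsum_congr hrw]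
    have hsumW := hsum_dot (V * V)
    rw [tsum_mul_left]
    have hle : (∑' t : ℕ, γ ^ (t + 1) * ((ρ ᵥ* (P ^ (t + 1))) ⬝ᵥ (V * V)))
        ≤ ∑' t : ℕ, γ ^ t * ((ρ ᵥ* (P ^ t)) ⬝ᵥ (V * V)) := by
      have := Summable.tsum_eq_zero_add hsumW
      have h0 := hgnn 0
      linarith [this]
    have hmul : (0:ℝ) ≤ (1 - γ) * (1 / γ) := mul_nonneg h1γ.le (by positivity)
    calc (1 - γ) * ((1 / γ) * ∑' t : ℕ, γ ^ (t + 1) * ((ρ ᵥ* (P ^ (t + 1))) ⬝ᵥ (V * V)))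
        ≤ (1 - γ) * ((1 / γ) * ∑' t : ℕ, γ ^ t * ((ρ ᵥ* (P ^ t)) ⬝ᵥ (V * V))) := by
          apply mul_le_mul_of_nonneg_left _ h1γ.le
          exact mul_le_mul_of_nonneg_left hle (by positivity)
      _ = 1 / γ * ((1 - γ) * ∑' t : ℕ, γ ^ t * ((ρ ᵥ* (P ^ t)) ⬝ᵥ (V * V))) := by ring
  -- pointwise bound : (1/γ) (V s)² − ((P V) s)² ≤ (2/γ²) V s
  have hpoint : ∀ s, (1 / γ) * (V * V) s - ((P *ᵥ V) s) ^ 2 ≤ (2 / γ ^ 2) * V s := by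
    intro s
    have hPVs : γ * (P *ᵥ V) s = V s - r s := by linarith [hV s]
    have hVs := hV0 s
    have hr1 := (hr s).1
    have hr2 := (hr s).2
    have hγ2 : (0:ℝ) < γ ^ 2 := by positivity
    have h2 : (γ * (P *ᵥ V) s) ^ 2 = (V s - r s) ^ 2 := by rw [hPVs]
    have hstep : γ * (V s * V s) - γ ^ 2 * ((P *ᵥ V) s) ^ 2 ≤ 2 * V s := by
      nlinarith [h2, mul_nonneg h1γ.le (mul_self_nonneg (V s)),
        mul_nonneg (sub_nonneg.mpr hr2) hVs, sq_nonneg (r s)]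
    simp only [Pi.mul_apply]
    calc 1 / γ * (V s * V s) - ((P *ᵥ V) s) ^ 2
        = (γ * (V s * V s) - γ ^ 2 * ((P *ᵥ V) s) ^ 2) / γ ^ 2 := by
          field_simp
      _ ≤ (2 * V s) / γ ^ 2 := by gcongr
      _ = 2 / γ ^ 2 * V s := by ring
  -- assemble
  have hsplit : (∑ s, ((1 - γ) * ∑' t : ℕ, γ ^ t * (ρ ᵥ* (P ^ t)) s)
        * ((P *ᵥ (V * V)) s - ((P *ᵥ V) s) ^ 2))
      = (∑ s, ((1 - γ) * ∑' t : ℕ, γ ^ t * (ρ ᵥ* (P ^ t)) s) * (P *ᵥ (V * V)) s)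
        - ∑ s, ((1 - γ) * ∑' t : ℕ, γ ^ t * (ρ ᵥ* (P ^ t)) s) * ((P *ᵥ V) s) ^ 2 := by
    rw [← Finset.sum_sub_distrib]
    exact Finset.sum_congr rfl fun s _ => by ring
  rw [hsplit]
  have step2 : (∑ s, ((1 - γ) * ∑' t : ℕ, γ ^ t * (ρ ᵥ* (P ^ t)) s) * (P *ᵥ (V * V)) s)
        - (∑ s, ((1 - γ) * ∑' t : ℕ, γ ^ t * (ρ ᵥ* (P ^ t)) s) * ((P *ᵥ V) s) ^ 2)
      ≤ ∑ s, ((1 - γ) * ∑' t : ℕ, γ ^ t * (ρ ᵥ* (P ^ t)) s) * ((2 / γ ^ 2) * V s) := by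
    have h1 : (∑ s, ((1 - γ) * ∑' t : ℕ, γ ^ t * (ρ ᵥ* (P ^ t)) s) * (P *ᵥ (V * V)) s)
        - (∑ s, ((1 - γ) * ∑' t : ℕ, γ ^ t * (ρ ᵥ* (P ^ t)) s) * ((P *ᵥ V) s) ^ 2)
      ≤ ∑ s, ((1 - γ) * ∑' t : ℕ, γ ^ t * (ρ ᵥ* (P ^ t)) s)
          * ((1 / γ) * (V * V) s - ((P *ᵥ V) s) ^ 2) := by
      have : (∑ s, ((1 - γ) * ∑' t : ℕ, γ ^ t * (ρ ᵥ* (P ^ t)) s)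
          * ((1 / γ) * (V * V) s - ((P *ᵥ V) s) ^ 2))
        = (1 / γ) * (∑ s, ((1 - γ) * ∑' t : ℕ, γ ^ t * (ρ ᵥ* (P ^ t)) s) * (V * V) s)
          - ∑ s, ((1 - γ) * ∑' t : ℕ, γ ^ t * (ρ ᵥ* (P ^ t)) s) * ((P *ᵥ V) s) ^ 2 := by
        rw [Finset.mul_sum, ← Finset.sum_sub_distrib]
        exact Finset.sum_congr rfl fun s _ => by ring
      rw [this]
      linarith [hshift]
    refine le_trans h1 (Finset.sum_le_sum fun s _ => ?_)
    exact mul_le_mul_of_nonneg_left (hpoint s) (hdnn s)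
  refine le_trans step2 ?_
  have step3 : (∑ s, ((1 - γ) * ∑' t : ℕ, γ ^ t * (ρ ᵥ* (P ^ t)) s) * ((2 / γ ^ 2) * V s))
      ≤ (2 / γ ^ 2) * (1 / (1 - γ)) := by
    calc (∑ s, ((1 - γ) * ∑' t : ℕ, γ ^ t * (ρ ᵥ* (P ^ t)) s) * ((2 / γ ^ 2) * V s))
        ≤ ∑ s, ((1 - γ) * ∑' t : ℕ, γ ^ t * (ρ ᵥ* (P ^ t)) s) * ((2 / γ ^ 2) * (1 / (1 - γ))) := by
          refine Finset.sum_le_sum fun s _ => ?_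
          refine mul_le_mul_of_nonneg_left ?_ (hdnn s)
          exact mul_le_mul_of_nonneg_left (hVub s) (by positivity)
      _ = (2 / γ ^ 2) * (1 / (1 - γ)) := by
          rw [← Finset.sum_mul, hmass, one_mul]
  refine le_trans step3 ?_
  rw [div_mul_div_comm, mul_one, div_le_div_iff₀ (by positivity) h1γ]
  nlinarith [mul_nonneg h1γ.le (show (0:ℝ) ≤ 14 * γ ^ 2 - 2 by nlinarith)]
end

section
/- Let γ ∈ (0,1), let P be an S×S row-stochastic matrix, let r ∈ ℝ^S satisfy 0 ≤ r_s ≤ 1 for all s, and let V ∈ ℝ^S be the unique solution of V = r + γPV. Define v ∈ ℝ^S by v_s := (P(V∘V))_s − ((PV)_s)². Then entrywise, v ≤ (1/γ²)(γ²P − I)(V∘V) + (2/γ²) V∘r. -/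
open Matrix

/-- Let `γ ∈ (0,1)`, `P` an `S×S` row-stochastic matrix, `r ∈ [0,1]^S`, and `V` the unique
solution of `V = r + γPV`.  With `v_s := (P(V∘V))_s − ((PV)_s)²`, entrywise
`v ≤ (1/γ²)(γ²P − I)(V∘V) + (2/γ²) V∘r`. -/
theorem stmt13 (S : ℕ) (γ : ℝ) (hγ0 : 0 < γ) (hγ1 : γ < 1)
    (P : Matrix (Fin S) (Fin S) ℝ)
    (hP0 : ∀ s s', 0 ≤ P s s') (hP1 : ∀ s, ∑ s', P s s' = 1)
    (r : Fin S → ℝ) (hr : ∀ s, 0 ≤ r s ∧ r s ≤ 1)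
    (V : Fin S → ℝ) (hV : ∀ s, V s = r s + γ * (P *ᵥ V) s) :
    letI v : Fin S → ℝ := fun s => (P *ᵥ (V * V)) s - ((P *ᵥ V) s) ^ 2
    ∀ s : Fin S,
      v s ≤ (1 / γ ^ 2) * (((γ ^ 2 • P - 1) *ᵥ (V * V)) s) + (2 / γ ^ 2) * (V s * r s) := by
  intro s
  have hγ2 : (0:ℝ) < γ ^ 2 := by positivity
  have hexp : ((γ ^ 2 • P - 1) *ᵥ (V * V)) s
      = γ ^ 2 * (P *ᵥ (V * V)) s - (V s) ^ 2 := by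
    rw [sub_mulVec, smul_mulVec, one_mulVec]
    simp [Pi.smul_apply, sq, Pi.mul_apply]
  have h := hV s
  have key : γ * (P *ᵥ V) s = V s - r s := by linarith
  show (P *ᵥ (V * V)) s - ((P *ᵥ V) s) ^ 2 ≤ _
  rw [hexp]
  have hsq : (γ * (P *ᵥ V) s) ^ 2 = (V s - r s) ^ 2 := by rw [key]
  have hrs : 0 ≤ (r s) ^ 2 := sq_nonneg _
  rw [div_mul_eq_mul_div, one_mul, div_mul_eq_mul_div, ← add_div, le_div_iff₀ hγ2]
  nlinarith [sq_nonneg (r s), mul_pow γ ((P *ᵥ V) s) 2]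
end

section
/- Let P be an S×S row-stochastic matrix with rows P_s, let d ∈ ℝ^S have nonnegative entries, and let W, V ∈ ℝ^S satisfy 0 ≤ W ≤ V entrywise. Then ∑_s d_s [Var_{P_s}(W) − Var_{P_s}(V)] ≤ 2 ‖V‖_∞ ∑_s d_s (P(V−W))_s. -/
open Matrix

/-- The variance `Var_p(U) := ∑_s p_s U_s² − (∑_s p_s U_s)²` of a vector `U` under a
probability vector `p`. -/
noncomputable def varVec {S : ℕ} (p U : Fin S → ℝ) : ℝ :=
  (∑ s, p s * U s ^ 2) - (∑ s, p s * U s) ^ 2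

/-- Let `P` be an `S×S` row-stochastic matrix with rows `P_s`, let `d` have nonnegative
entries, and let `0 ≤ W ≤ V` entrywise.  Then
`∑_s d_s [Var_{P_s}(W) − Var_{P_s}(V)] ≤ 2‖V‖_∞ ∑_s d_s (P(V−W))_s`. -/
theorem stmt14 (S : ℕ) (hS : 0 < S)
    (P : Matrix (Fin S) (Fin S) ℝ)
    (hP0 : ∀ s s', 0 ≤ P s s') (hP1 : ∀ s, ∑ s', P s s' = 1)
    (d : Fin S → ℝ) (hd : ∀ s, 0 ≤ d s)
    (W V : Fin S → ℝ) (hW0 : ∀ s, 0 ≤ W s) (hWV : ∀ s, W s ≤ V s) :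
    (∑ s, d s * (varVec (P s) W - varVec (P s) V)) ≤
      2 * (⨆ s, |V s|) * ∑ s, d s * (P *ᵥ (V - W)) s := by
  have : Nonempty (Fin S) := ⟨⟨0, hS⟩⟩
  set M := ⨆ s, |V s| with hMdef
  have hM : ∀ s, |V s| ≤ M := fun s => le_ciSup (f := fun s => |V s|) (Set.Finite.bddAbove (Set.finite_range _)) s
  have hVM : ∀ s, V s ≤ M := fun s => (le_abs_self _).trans (hM s)
  have key : ∀ s, varVec (P s) W - varVec (P s) V ≤ 2 * M * (P *ᵥ (V - W)) s := by
    intro s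
    have hrow : ∀ s', 0 ≤ P s s' := hP0 s
    have hsum1 : ∑ s', P s s' = 1 := hP1 s
    set a := ∑ s', P s s' * W s' with ha
    set b := ∑ s', P s s' * V s' with hb
    have hab : a ≤ b := Finset.sum_le_sum fun s' _ =>
      mul_le_mul_of_nonneg_left (hWV s') (hrow s')
    have ha0 : 0 ≤ a := Finset.sum_nonneg fun s' _ => mul_nonneg (hrow s') (hW0 s')
    have hbM : b ≤ M := by
      calc b ≤ ∑ s', P s s' * M := Finset.sum_le_sum fun s' _ =>
              mul_le_mul_of_nonneg_left (hVM s') (hrow s')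
        _ = M := by rw [← Finset.sum_mul, hsum1, one_mul]
    have hsq : ∑ s', P s s' * W s' ^ 2 ≤ ∑ s', P s s' * V s' ^ 2 :=
      Finset.sum_le_sum fun s' _ => mul_le_mul_of_nonneg_left
        (pow_le_pow_left₀ (hW0 s') (hWV s') 2) (hrow s')
    have hmv : (P *ᵥ (V - W)) s = b - a := by
      simp only [mulVec, dotProduct, Pi.sub_apply, ha, hb, mul_sub, Finset.sum_sub_distrib]
    have h2 : b ^ 2 - a ^ 2 ≤ 2 * M * (b - a) := by
      have : b ^ 2 - a ^ 2 = (b - a) * (b + a) := by ring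
      rw [this]
      have hba : 0 ≤ b - a := sub_nonneg.mpr hab
      have hbam : b + a ≤ 2 * M := by nlinarith
      nlinarith
    rw [hmv]
    simp only [varVec, ← ha, ← hb]
    nlinarith
  calc ∑ s, d s * (varVec (P s) W - varVec (P s) V)
      ≤ ∑ s, d s * (2 * M * (P *ᵥ (V - W)) s) :=
        Finset.sum_le_sum fun s _ => mul_le_mul_of_nonneg_left (key s) (hd s)
    _ = 2 * M * ∑ s, d s * (P *ᵥ (V - W)) s := by
        rw [Finset.mul_sum]; exact Finset.sum_congr rfl fun s _ => by ring
end

section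
/- Let γ ∈ (0,1), let P be an S×S row-stochastic matrix with rows P_s, let ρ ∈ ℝ^S be a probability row vector, let d := (1−γ) ∑_{t=0}^{∞} γ^t ρP^t, and set ρ̃ := (d − (1−γ)ρ)/γ. Then for all W, V ∈ ℝ^S with 0 ≤ W ≤ V entrywise, ∑_s d_s Var_{P_s}(V−W) ≤ ‖V−W‖_∞ · ⟨ρ̃, V−W⟩. -/
open Matrix

/-- Let `γ ∈ (0,1)`, `P` an `S×S` row-stochastic matrix with rows `P_s`, `ρ` a probability row
vector, `d := (1−γ) ∑_{t=0}^∞ γ^t ρP^t`, and `ρ̃ := (d − (1−γ)ρ)/γ`.  Then for all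
`0 ≤ W ≤ V` entrywise, `∑_s d_s Var_{P_s}(V−W) ≤ ‖V−W‖_∞ · ⟨ρ̃, V−W⟩`. -/
theorem stmt15 (S : ℕ) (γ : ℝ) (hγ0 : 0 < γ) (hγ1 : γ < 1)
    (P : Matrix (Fin S) (Fin S) ℝ)
    (hP0 : ∀ s s', 0 ≤ P s s') (hP1 : ∀ s, ∑ s', P s s' = 1)
    (ρ : Fin S → ℝ) (hρ0 : ∀ s, 0 ≤ ρ s) (hρ1 : ∑ s, ρ s = 1) :
    letI d : Fin S → ℝ := fun s => (1 - γ) * ∑' t : ℕ, γ ^ t * (ρ ᵥ* (P ^ t)) s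
    letI ρt : Fin S → ℝ := fun s => (d s - (1 - γ) * ρ s) / γ
    ∀ W V : Fin S → ℝ, (∀ s, 0 ≤ W s) → (∀ s, W s ≤ V s) →
      (∑ s, d s * varVec (P s) (V - W)) ≤
        (⨆ s, |V s - W s|) * ∑ s, ρt s * (V s - W s) := by
  intro W V hW hWV
  set d : Fin S → ℝ := fun s => (1 - γ) * ∑' t : ℕ, γ ^ t * (ρ ᵥ* (P ^ t)) s with hd
  set ρt : Fin S → ℝ := fun s => (d s - (1 - γ) * ρ s) / γ with hρtd
  have hU0 : ∀ s, 0 ≤ V s - W s := fun s => sub_nonneg.2 (hWV s)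
  set M : ℝ := ⨆ s, |V s - W s| with hM
  have hM0 : 0 ≤ M := Real.iSup_nonneg fun s => abs_nonneg _
  have hUM : ∀ s, V s - W s ≤ M := by
    intro s
    calc V s - W s ≤ |V s - W s| := le_abs_self _
      _ ≤ M := le_ciSup (f := fun s => |V s - W s|) (Set.Finite.bddAbove (Set.finite_range _)) s
  -- ρ P^t is a probability vector
  have hprob : ∀ t : ℕ, (∀ s, 0 ≤ (ρ ᵥ* (P ^ t)) s) ∧ (∑ s, (ρ ᵥ* (P ^ t)) s = 1) := by
    intro t
    induction t with
    | zero => simpa using ⟨hρ0, hρ1⟩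
    | succ t ih =>
      have h1 : ρ ᵥ* (P ^ (t + 1)) = (ρ ᵥ* (P ^ t)) ᵥ* P := by
        rw [pow_succ, ← Matrix.vecMul_vecMul]
      constructor
      · intro s
        rw [h1]
        show 0 ≤ ∑ s', (ρ ᵥ* (P ^ t)) s' * P s' s
        exact Finset.sum_nonneg fun s' _ => mul_nonneg (ih.1 s') (hP0 s' s)
      · rw [h1]
        show ∑ s, ∑ s', (ρ ᵥ* (P ^ t)) s' * P s' s = 1
        rw [Finset.sum_comm]
        simp only [← Finset.mul_sum, hP1, mul_one]
        exact ih.2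
  -- summability
  have hsum : ∀ s, Summable (fun t : ℕ => γ ^ t * (ρ ᵥ* (P ^ t)) s) := by
    intro s
    refine Summable.of_nonneg_of_le
      (fun t => mul_nonneg (pow_nonneg hγ0.le _) ((hprob t).1 s))
      (fun t => ?_) (summable_geometric_of_lt_one hγ0.le hγ1)
    have h1 : (ρ ᵥ* (P ^ t)) s ≤ 1 := by
      rw [← (hprob t).2]
      exact Finset.single_le_sum (fun s' _ => (hprob t).1 s') (Finset.mem_univ s)
    nlinarith [pow_nonneg hγ0.le t, (hprob t).1 s]
  have hd0 : ∀ s, 0 ≤ d s := fun s =>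
    mul_nonneg (by linarith)
      (tsum_nonneg fun t => mul_nonneg (pow_nonneg hγ0.le _) ((hprob t).1 s))
  -- ρt = d ᵥ* P
  have hρt : ∀ s, ρt s = (d ᵥ* P) s := by
    intro s
    have h2 : (d ᵥ* P) s = (1 - γ) * ∑' t : ℕ, γ ^ t * (ρ ᵥ* (P ^ (t + 1))) s := by
      show ∑ s', d s' * P s' s = _
      have : ∀ s', d s' * P s' s
          = (1 - γ) * ∑' t : ℕ, (γ ^ t * (ρ ᵥ* (P ^ t)) s') * P s' s := by
        intro s'
        rw [tsum_mul_right]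
        show (1 - γ) * (∑' t : ℕ, γ ^ t * (ρ ᵥ* (P ^ t)) s') * P s' s = _
        ring
      rw [Finset.sum_congr rfl (fun s' _ => this s'), ← Finset.mul_sum]
      congr 1
      rw [← Summable.tsum_finsetSum (fun s' _ => (hsum s').mul_right _)]
      congr 1
      ext t
      have h3 : ρ ᵥ* (P ^ (t + 1)) = (ρ ᵥ* (P ^ t)) ᵥ* P := by
        rw [pow_succ, ← Matrix.vecMul_vecMul]
      rw [h3]
      show ∑ s', γ ^ t * (ρ ᵥ* (P ^ t)) s' * P s' s = γ ^ t * ∑ s', (ρ ᵥ* (P ^ t)) s' * P s' s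
      rw [Finset.mul_sum]
      exact Finset.sum_congr rfl fun s' _ => by ring
    have key : γ * (d ᵥ* P) s = d s - (1 - γ) * ρ s := by
      rw [h2]
      have h4 : ∑' t : ℕ, γ ^ (t + 1) * (ρ ᵥ* (P ^ (t + 1))) s
          = (∑' t : ℕ, γ ^ t * (ρ ᵥ* (P ^ t)) s) - γ ^ 0 * (ρ ᵥ* (P ^ 0)) s := by
        rw [Summable.tsum_eq_zero_add (hsum s)]; ring
      have h7 : (∑' t : ℕ, γ ^ (t + 1) * (ρ ᵥ* (P ^ (t + 1))) s)
          = γ * ∑' t : ℕ, γ ^ t * (ρ ᵥ* (P ^ (t + 1))) s := by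
        rw [← tsum_mul_left]
        exact tsum_congr fun t => by ring
      have h5 : γ * ((1 - γ) * ∑' t : ℕ, γ ^ t * (ρ ᵥ* (P ^ (t + 1))) s)
          = (1 - γ) * ∑' t : ℕ, γ ^ (t + 1) * (ρ ᵥ* (P ^ (t + 1))) s := by
        rw [h7]; ring
      rw [h5, h4]
      have h6 : (ρ ᵥ* (P ^ 0)) s = ρ s := by simp
      rw [h6]
      show (1 - γ) * (_ - _) = (1 - γ) * (∑' t : ℕ, γ ^ t * (ρ ᵥ* (P ^ t)) s) - (1 - γ) * ρ s
      ring
    show (d s - (1 - γ) * ρ s) / γ = _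
    rw [← key, mul_comm, mul_div_assoc, div_self hγ0.ne', mul_one]
  -- main chain
  calc ∑ s, d s * varVec (P s) (V - W)
      ≤ ∑ s, d s * (M * ∑ s', P s s' * (V s' - W s')) := by
        apply Finset.sum_le_sum
        intro s _
        apply mul_le_mul_of_nonneg_left _ (hd0 s)
        calc varVec (P s) (V - W) ≤ ∑ s', P s s' * (V s' - W s') ^ 2 := by
              have := sub_le_self (∑ s', P s s' * ((V - W) s') ^ 2)
                (sq_nonneg (∑ s', P s s' * (V - W) s'))
              simpa [varVec, Pi.sub_apply] using this
          _ ≤ ∑ s', P s s' * (M * (V s' - W s')) := by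
              apply Finset.sum_le_sum
              intro s' _
              apply mul_le_mul_of_nonneg_left _ (hP0 s s')
              nlinarith [hU0 s', hUM s']
          _ = M * ∑ s', P s s' * (V s' - W s') := by
              rw [Finset.mul_sum]
              exact Finset.sum_congr rfl fun s' _ => by ring
    _ = M * ∑ s', (d ᵥ* P) s' * (V s' - W s') := by
        simp only [Matrix.vecMul, dotProduct, Finset.sum_mul, Finset.mul_sum]
        rw [Finset.sum_comm]
        refine Finset.sum_congr rfl fun s _ => Finset.sum_congr rfl fun s' _ => by ring
    _ = M * ∑ s, ρt s * (V s - W s) := by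
        congr 1
        exact Finset.sum_congr rfl fun s _ => by rw [hρt s]
end

section
/- Let j ≥ 1 be an integer, and let Δ_0, Δ_1, …, Δ_j, α_1, …, α_j, β_1, …, β_j be nonnegative reals satisfying Δ_k ≤ α_k √(Δ_{k−1}) + β_k for every 1 ≤ k ≤ j. Then Δ_j ≤ ∑_{i=1}^{j} ( ∏_{m=i+1}^{j} α_m^{1/2^{j−m}} ) β_i^{1/2^{j−i}} + ( ∏_{m=1}^{j} α_m^{1/2^{j−m}} ) Δ_0^{1/2^{j}}. -/
lemma my_sqrt_add_le (a b : ℝ) (ha : 0 ≤ a) (hb : 0 ≤ b) :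
    Real.sqrt (a + b) ≤ Real.sqrt a + Real.sqrt b := by
  have h1 := Real.sq_sqrt ha
  have h2 := Real.sq_sqrt hb
  have hs1 := Real.sqrt_nonneg a
  have hs2 := Real.sqrt_nonneg b
  have h : a + b ≤ (Real.sqrt a + Real.sqrt b) ^ 2 := by nlinarith
  calc Real.sqrt (a + b) ≤ Real.sqrt ((Real.sqrt a + Real.sqrt b) ^ 2) :=
        Real.sqrt_le_sqrt h
    _ = Real.sqrt a + Real.sqrt b := Real.sqrt_sq (by positivity)

lemma my_sqrt_sum_le (s : Finset ℕ) (f : ℕ → ℝ) (hf : ∀ i ∈ s, 0 ≤ f i) :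
    Real.sqrt (∑ i ∈ s, f i) ≤ ∑ i ∈ s, Real.sqrt (f i) := by
  induction s using Finset.cons_induction with
  | empty => simp
  | cons a t hat ih =>
      rw [Finset.sum_cons, Finset.sum_cons]
      have h1 : 0 ≤ f a := hf a (Finset.mem_cons_self a t)
      have h2 : ∀ i ∈ t, 0 ≤ f i := fun i hi => hf i (Finset.mem_cons_of_mem hi)
      calc Real.sqrt (f a + ∑ i ∈ t, f i) ≤ Real.sqrt (f a) + Real.sqrt (∑ i ∈ t, f i) :=
            my_sqrt_add_le _ _ h1 (Finset.sum_nonneg h2)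
        _ ≤ _ := by gcongr; exact ih h2

lemma my_sqrt_prod (s : Finset ℕ) (f : ℕ → ℝ) (hf : ∀ i ∈ s, 0 ≤ f i) :
    Real.sqrt (∏ i ∈ s, f i) = ∏ i ∈ s, Real.sqrt (f i) := by
  induction s using Finset.cons_induction with
  | empty => simp
  | cons a t hat ih =>
      rw [Finset.prod_cons, Finset.prod_cons,
        Real.sqrt_mul (hf a (Finset.mem_cons_self a t)),
        ih (fun i hi => hf i (Finset.mem_cons_of_mem hi))]

lemma my_sqrt_rpow (x : ℝ) (hx : 0 ≤ x) (n : ℕ) :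
    Real.sqrt (x ^ ((1 : ℝ) / 2 ^ n)) = x ^ ((1 : ℝ) / 2 ^ (n + 1)) := by
  rw [Real.sqrt_eq_rpow, ← Real.rpow_mul hx]
  congr 1
  rw [pow_succ]
  ring

lemma stmt16_alg (j : ℕ) (hj : 1 ≤ j) (α β : ℕ → ℝ) (D : ℝ) :
    α (j + 1) * ((∑ i ∈ Finset.Icc 1 j,
        (∏ m ∈ Finset.Icc (i + 1) j, (α m) ^ ((1 : ℝ) / 2 ^ (j + 1 - m))) *
          (β i) ^ ((1 : ℝ) / 2 ^ (j + 1 - i)))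
      + (∏ m ∈ Finset.Icc 1 j, (α m) ^ ((1 : ℝ) / 2 ^ (j + 1 - m))) *
          D ^ ((1 : ℝ) / 2 ^ (j + 1))) + β (j + 1)
    = (∑ i ∈ Finset.Icc 1 (j + 1),
        (∏ m ∈ Finset.Icc (i + 1) (j + 1), (α m) ^ ((1 : ℝ) / 2 ^ (j + 1 - m))) *
          (β i) ^ ((1 : ℝ) / 2 ^ (j + 1 - i)))
      + (∏ m ∈ Finset.Icc 1 (j + 1), (α m) ^ ((1 : ℝ) / 2 ^ (j + 1 - m))) *
          D ^ ((1 : ℝ) / 2 ^ (j + 1)) := by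
  have hsplit : ∀ a : ℕ, a ≤ j + 1 →
      (∏ m ∈ Finset.Icc a (j + 1), (α m) ^ ((1 : ℝ) / 2 ^ (j + 1 - m))) =
      α (j + 1) * ∏ m ∈ Finset.Icc a j, (α m) ^ ((1 : ℝ) / 2 ^ (j + 1 - m)) := by
    intro a ha
    rw [Finset.prod_Icc_succ_top ha, Nat.sub_self, pow_zero, one_div_one,
      Real.rpow_one, mul_comm]
  rw [Finset.sum_Icc_succ_top (by omega : 1 ≤ j + 1)]
  rw [show Finset.Icc (j + 1 + 1) (j + 1) = (∅ : Finset ℕ) from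
    Finset.Icc_eq_empty (by omega)]
  simp only [Finset.prod_empty, Nat.sub_self, pow_zero, one_mul, one_div_one,
    Real.rpow_one]
  rw [hsplit 1 (by omega)]
  rw [show (∑ i ∈ Finset.Icc 1 j,
      (∏ m ∈ Finset.Icc (i + 1) (j + 1), (α m) ^ ((1 : ℝ) / 2 ^ (j + 1 - m))) *
        (β i) ^ ((1 : ℝ) / 2 ^ (j + 1 - i)))
      = ∑ i ∈ Finset.Icc 1 j, α (j + 1) *
      ((∏ m ∈ Finset.Icc (i + 1) j, (α m) ^ ((1 : ℝ) / 2 ^ (j + 1 - m))) *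
        (β i) ^ ((1 : ℝ) / 2 ^ (j + 1 - i))) from
    Finset.sum_congr rfl fun i hi => by
      rw [hsplit (i + 1) (Nat.succ_le_succ (Finset.mem_Icc.mp hi).2), mul_assoc]]
  rw [mul_add, Finset.mul_sum]
  ring


/-- Let `j ≥ 1` and let `Δ_0,…,Δ_j, α_1,…,α_j, β_1,…,β_j` be nonnegative reals satisfying
`Δ_k ≤ α_k √(Δ_{k−1}) + β_k` for every `1 ≤ k ≤ j`.  Then
`Δ_j ≤ ∑_{i=1}^j (∏_{m=i+1}^j α_m^{1/2^{j−m}}) β_i^{1/2^{j−i}}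
      + (∏_{m=1}^j α_m^{1/2^{j−m}}) Δ_0^{1/2^j}`
(here `x^{1/2^k}` is the `(2^k)`-th root and an empty product equals `1`). -/
theorem stmt16 (j : ℕ) (hj : 1 ≤ j) (Δ α β : ℕ → ℝ)
    (hΔ : ∀ k, k ≤ j → 0 ≤ Δ k)
    (hα : ∀ k, 1 ≤ k → k ≤ j → 0 ≤ α k)
    (hβ : ∀ k, 1 ≤ k → k ≤ j → 0 ≤ β k)
    (hrec : ∀ k, 1 ≤ k → k ≤ j → Δ k ≤ α k * Real.sqrt (Δ (k - 1)) + β k) :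
    Δ j ≤ (∑ i ∈ Finset.Icc 1 j,
        (∏ m ∈ Finset.Icc (i + 1) j, (α m) ^ ((1 : ℝ) / 2 ^ (j - m))) *
          (β i) ^ ((1 : ℝ) / 2 ^ (j - i)))
      + (∏ m ∈ Finset.Icc 1 j, (α m) ^ ((1 : ℝ) / 2 ^ (j - m))) *
          (Δ 0) ^ ((1 : ℝ) / 2 ^ j) := by
  induction j, hj using Nat.le_induction with
  | base =>
      have h := hrec 1 le_rfl le_rfl
      simp only [Finset.Icc_self, Finset.sum_singleton, Finset.prod_singleton]
      rw [show Finset.Icc 2 1 = (∅ : Finset ℕ) by rfl]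
      simp only [Finset.prod_empty, Nat.sub_self, pow_zero, one_mul, one_div_one]
      rw [Real.rpow_one, Real.rpow_one, pow_one, ← Real.sqrt_eq_rpow]
      linarith [h]
  | succ j hj ih =>
      have hΔ' : ∀ k, k ≤ j → 0 ≤ Δ k := fun k hk => hΔ k (by omega)
      have hα' : ∀ k, 1 ≤ k → k ≤ j → 0 ≤ α k := fun k h1 h2 => hα k h1 (by omega)
      have hβ' : ∀ k, 1 ≤ k → k ≤ j → 0 ≤ β k := fun k h1 h2 => hβ k h1 (by omega)
      have hrec' : ∀ k, 1 ≤ k → k ≤ j → Δ k ≤ α k * Real.sqrt (Δ (k - 1)) + β k :=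
        fun k h1 h2 => hrec k h1 (by omega)
      have hS := ih hΔ' hα' hβ' hrec'
      have hαmem : ∀ i : ℕ, ∀ m ∈ Finset.Icc (i + 1) j, 0 ≤ α m := by
        intro i m hm
        rw [Finset.mem_Icc] at hm
        exact hα' m (by omega) hm.2
      have hα1 : ∀ m ∈ Finset.Icc 1 j, 0 ≤ α m := by
        intro m hm; rw [Finset.mem_Icc] at hm; exact hα' m hm.1 hm.2
      have hterm : ∀ i ∈ Finset.Icc 1 j,
          0 ≤ (∏ m ∈ Finset.Icc (i + 1) j, (α m) ^ ((1 : ℝ) / 2 ^ (j - m))) *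
            (β i) ^ ((1 : ℝ) / 2 ^ (j - i)) := by
        intro i hi
        rw [Finset.mem_Icc] at hi
        exact mul_nonneg
          (Finset.prod_nonneg fun m hm => Real.rpow_nonneg (hαmem i m hm) _)
          (Real.rpow_nonneg (hβ' i hi.1 hi.2) _)
      have hprodnn : 0 ≤ (∏ m ∈ Finset.Icc 1 j, (α m) ^ ((1 : ℝ) / 2 ^ (j - m))) *
          (Δ 0) ^ ((1 : ℝ) / 2 ^ j) :=
        mul_nonneg (Finset.prod_nonneg fun m hm => Real.rpow_nonneg (hα1 m hm) _)
          (Real.rpow_nonneg (hΔ' 0 (by omega)) _)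
      -- sqrt of a product of alpha-powers over Icc (i+1) j (or Icc 1 j)
      have hsp : ∀ a : ℕ, (∀ m ∈ Finset.Icc a j, 0 ≤ α m) →
          Real.sqrt (∏ m ∈ Finset.Icc a j, (α m) ^ ((1 : ℝ) / 2 ^ (j - m))) =
          ∏ m ∈ Finset.Icc a j, (α m) ^ ((1 : ℝ) / 2 ^ (j + 1 - m)) := by
        intro a ha
        rw [my_sqrt_prod _ _ (fun m hm => Real.rpow_nonneg (ha m hm) _)]
        apply Finset.prod_congr rfl
        intro m hm
        rw [Finset.mem_Icc] at hm
        rw [my_sqrt_rpow _ (ha m (by rw [Finset.mem_Icc]; exact hm)) (j - m),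
          show j - m + 1 = j + 1 - m by omega]
      have key : Real.sqrt (Δ j) ≤
          (∑ i ∈ Finset.Icc 1 j,
            (∏ m ∈ Finset.Icc (i + 1) j, (α m) ^ ((1 : ℝ) / 2 ^ (j + 1 - m))) *
              (β i) ^ ((1 : ℝ) / 2 ^ (j + 1 - i)))
          + (∏ m ∈ Finset.Icc 1 j, (α m) ^ ((1 : ℝ) / 2 ^ (j + 1 - m))) *
              (Δ 0) ^ ((1 : ℝ) / 2 ^ (j + 1)) := by
        calc Real.sqrt (Δ j) ≤ Real.sqrt _ := Real.sqrt_le_sqrt hS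
          _ ≤ Real.sqrt (∑ i ∈ Finset.Icc 1 j,
                (∏ m ∈ Finset.Icc (i + 1) j, (α m) ^ ((1 : ℝ) / 2 ^ (j - m))) *
                  (β i) ^ ((1 : ℝ) / 2 ^ (j - i)))
              + Real.sqrt ((∏ m ∈ Finset.Icc 1 j, (α m) ^ ((1 : ℝ) / 2 ^ (j - m))) *
                  (Δ 0) ^ ((1 : ℝ) / 2 ^ j)) :=
            my_sqrt_add_le _ _ (Finset.sum_nonneg hterm) hprodnn
          _ ≤ (∑ i ∈ Finset.Icc 1 j, Real.sqrt
                ((∏ m ∈ Finset.Icc (i + 1) j, (α m) ^ ((1 : ℝ) / 2 ^ (j - m))) *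
                  (β i) ^ ((1 : ℝ) / 2 ^ (j - i))))
              + Real.sqrt ((∏ m ∈ Finset.Icc 1 j, (α m) ^ ((1 : ℝ) / 2 ^ (j - m))) *
                  (Δ 0) ^ ((1 : ℝ) / 2 ^ j)) := by
            gcongr
            exact my_sqrt_sum_le _ _ hterm
          _ = _ := by
            congr 1
            · apply Finset.sum_congr rfl
              intro i hi
              rw [Finset.mem_Icc] at hi
              rw [Real.sqrt_mul
                  (Finset.prod_nonneg fun m hm => Real.rpow_nonneg (hαmem i m hm) _),
                hsp (i + 1) (hαmem i), my_sqrt_rpow _ (hβ' i hi.1 hi.2) (j - i),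
                show j - i + 1 = j + 1 - i by omega]
            · rw [Real.sqrt_mul
                  (Finset.prod_nonneg fun m hm => Real.rpow_nonneg (hα1 m hm) _),
                hsp 1 hα1, my_sqrt_rpow _ (hΔ' 0 (by omega)) j]
      have hrecj := hrec (j + 1) (by omega) le_rfl
      simp only [Nat.add_sub_cancel] at hrecj
      have hαj1 : 0 ≤ α (j + 1) := hα (j + 1) (by omega) le_rfl
      calc Δ (j + 1) ≤ α (j + 1) * Real.sqrt (Δ j) + β (j + 1) := hrecj
        _ ≤ α (j + 1) * ((∑ i ∈ Finset.Icc 1 j,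
              (∏ m ∈ Finset.Icc (i + 1) j, (α m) ^ ((1 : ℝ) / 2 ^ (j + 1 - m))) *
                (β i) ^ ((1 : ℝ) / 2 ^ (j + 1 - i)))
            + (∏ m ∈ Finset.Icc 1 j, (α m) ^ ((1 : ℝ) / 2 ^ (j + 1 - m))) *
                (Δ 0) ^ ((1 : ℝ) / 2 ^ (j + 1))) + β (j + 1) := by
            have := mul_le_mul_of_nonneg_left key hαj1
            linarith
        _ = _ := stmt16_alg j hj α β (Δ 0)
end
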